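/- arXiv:1006.0446 — 5 statements merged into one kernel-verified Lean document; each statement's English description precedes it below -/
import Mathlib

section
/- Suppose that φ: G₁ → G₂ is a nonconstant harmonic morphism of graphs, and ψ: G₂ → G₃ is a morphism of graphs such that the composition ρ := ψ ∘ φ is harmonic. Then ψ is harmonic. -/
open scoped Classical

/-- A finite connected multigraph without loop edges. -/
structure Multigraph where
  V : Type
  E : Type
  [fintypeV : Fintype V]
  [fintypeE : Fintype E]
  ends : E → Sym2 V
  loopless : ∀ e : E, ¬ (ends e).IsDiag
  connected : (SimpleGraph.fromRel fun x y : V => ∃ e : E, ends e = s(x, y)).Connected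

attribute [instance] Multigraph.fintypeV Multigraph.fintypeE

namespace Multigraph

/-- The genus (first Betti number, cyclomatic number) of a multigraph. -/
def genus (G : Multigraph) : ℤ :=
  (Fintype.card G.E : ℤ) - (Fintype.card G.V : ℤ) + 1

/-- A cycle in a multigraph, given as a nonempty set of edges such that every vertex is
incident to either 0 or 2 of its edges. -/
def IsCycleSet (G : Multigraph) (C : Set G.E) : Prop :=
  C.Nonempty ∧ ∀ x : G.V,
    Nat.card {e : G.E // e ∈ C ∧ x ∈ G.ends e} = 0 ∨
    Nat.card {e : G.E // e ∈ C ∧ x ∈ G.ends e} = 2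

end Multigraph

/-- A morphism of multigraphs: vertices go to vertices, and each edge goes either to an
edge joining the images of its endpoints, or to the common image of its endpoints
(in which case the edge is *vertical*). -/
structure Morphism (G G' : Multigraph) where
  vmap : G.V → G'.V
  emap : G.E → G'.E ⊕ G'.V
  compat : ∀ e : G.E,
    (∀ e', emap e = Sum.inl e' → G'.ends e' = (G.ends e).map vmap) ∧
    (∀ v, emap e = Sum.inr v → (G.ends e).map vmap = Sym2.diag v)

namespace Morphism

/-- A morphism is harmonic if for every vertex `x`, the number of edges incident to `x`
mapping to a given edge `e'` incident to `φ(x)` is independent of the choice of `e'`. -/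
def Harmonic {G G' : Multigraph} (φ : Morphism G G') : Prop :=
  ∀ (x : G.V) (e₁ e₂ : G'.E), φ.vmap x ∈ G'.ends e₁ → φ.vmap x ∈ G'.ends e₂ →
    Nat.card {e : G.E // x ∈ G.ends e ∧ φ.emap e = Sum.inl e₁} =
    Nat.card {e : G.E // x ∈ G.ends e ∧ φ.emap e = Sum.inl e₂}

/-- A morphism is nonconstant if its image is not a single vertex. -/
def Nonconstant {G G' : Multigraph} (φ : Morphism G G') : Prop :=
  ∃ x y : G.V, φ.vmap x ≠ φ.vmap y

/-- Composition of morphisms of multigraphs. -/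
def comp {G₁ G₂ G₃ : Multigraph} (ψ : Morphism G₂ G₃) (φ : Morphism G₁ G₂) :
    Morphism G₁ G₃ where
  vmap := ψ.vmap ∘ φ.vmap
  emap e := Sum.elim ψ.emap (fun v => Sum.inr (ψ.vmap v)) (φ.emap e)
  compat e := by
    constructor
    · intro e'' h
      rcases hφ : φ.emap e with e' | v
      · simp only [hφ, Sum.elim_inl] at h
        have h1 := (φ.compat e).1 e' hφ
        have h2 := (ψ.compat e').1 e'' h
        rw [h2, h1, Sym2.map_map]
      · simp only [hφ, Sum.elim_inr] at h
        simp at h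
    · intro v h
      rcases hφ : φ.emap e with e' | v₀
      · simp only [hφ, Sum.elim_inl] at h
        have h1 := (φ.compat e).1 e' hφ
        have h2 := (ψ.compat e').2 v h
        rw [← Sym2.map_map, ← h1]
        exact h2
      · simp only [hφ, Sum.elim_inr, Sum.inr.injEq] at h
        have h1 := (φ.compat e).2 v₀ hφ
        subst h
        rw [← Sym2.map_map, h1]
        rfl
end Morphism

/-- A group of automorphisms of a multigraph `G` (a faithful action of `Γ` on `G` by
automorphisms, i.e. a subgroup of `Aut(G)`). -/
structure GraphAction (Γ : Type) [Group Γ] (G : Multigraph) where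
  actV : Γ →* Equiv.Perm G.V
  actE : Γ →* Equiv.Perm G.E
  ends_map : ∀ (γ : Γ) (e : G.E), G.ends (actE γ e) = (G.ends e).map (actV γ)
  faithful : ∀ γ : Γ, (∀ x : G.V, actV γ x = x) → (∀ e : G.E, actE γ e = e) → γ = 1

namespace GraphAction

variable {Γ : Type} [Group Γ] {G : Multigraph}

/-- Two vertices lie in the same `Δ`-orbit. -/
def vrel (A : GraphAction Γ G) (Δ : Subgroup Γ) (x y : G.V) : Prop :=
  ∃ δ ∈ Δ, A.actV δ x = y

/-- Two edges lie in the same `Δ`-orbit. -/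
def erel (A : GraphAction Γ G) (Δ : Subgroup Γ) (e f : G.E) : Prop :=
  ∃ δ ∈ Δ, A.actE δ e = f

/-- The setoid of `Δ`-orbits of vertices. -/
def vSetoid (A : GraphAction Γ G) (Δ : Subgroup Γ) : Setoid G.V where
  r := A.vrel Δ
  iseqv := by
    constructor
    · intro x; exact ⟨1, Δ.one_mem, by simp⟩
    · rintro x y ⟨δ, hδ, h⟩
      refine ⟨δ⁻¹, Δ.inv_mem hδ, ?_⟩
      rw [map_inv, ← h]
      exact Equiv.symm_apply_apply _ _
    · rintro x y z ⟨δ₁, h1, e1⟩ ⟨δ₂, h2, e2⟩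
      refine ⟨δ₂ * δ₁, Δ.mul_mem h2 h1, ?_⟩
      rw [map_mul]
      simp [Equiv.Perm.mul_apply, e1, e2]

/-- The setoid of `Δ`-orbits of edges. -/
def eSetoid (A : GraphAction Γ G) (Δ : Subgroup Γ) : Setoid G.E where
  r := A.erel Δ
  iseqv := by
    constructor
    · intro e; exact ⟨1, Δ.one_mem, by simp⟩
    · rintro e f ⟨δ, hδ, h⟩
      refine ⟨δ⁻¹, Δ.inv_mem hδ, ?_⟩
      rw [map_inv, ← h]
      exact Equiv.symm_apply_apply _ _
    · rintro e f k ⟨δ₁, h1, e1⟩ ⟨δ₂, h2, e2⟩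
      refine ⟨δ₂ * δ₁, Δ.mul_mem h2 h1, ?_⟩
      rw [map_mul]
      simp [Equiv.Perm.mul_apply, e1, e2]

/-- An edge is `Δ`-vertical if its two endpoints lie in the same `Δ`-orbit (so it is
contracted by the quotient morphism `G → G/Δ`). -/
def Vertical (A : GraphAction Γ G) (Δ : Subgroup Γ) (e : G.E) : Prop :=
  ∃ x y : G.V, G.ends e = s(x, y) ∧ A.vrel Δ x y

/-- The vertex set of the quotient graph `G/Δ`: the `Δ`-orbits of vertices. -/
abbrev quotV (A : GraphAction Γ G) (Δ : Subgroup Γ) : Type :=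
  Quotient (A.vSetoid Δ)

/-- The edge set of the quotient graph `G/Δ`: the `Δ`-orbits of non-vertical edges. -/
abbrev quotE (A : GraphAction Γ G) (Δ : Subgroup Γ) : Type :=
  Quotient ((A.eSetoid Δ).comap (Subtype.val : {e : G.E // ¬ A.Vertical Δ e} → G.E))

/-- The genus of the quotient graph `G/Δ`. -/
noncomputable def quotGenus (A : GraphAction Γ G) (Δ : Subgroup Γ) : ℤ :=
  (Nat.card (A.quotE Δ) : ℤ) - (Nat.card (A.quotV Δ) : ℤ) + 1

/-- The order of the stabilizer `Δ_x` of a vertex `x`. -/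
noncomputable def stabOrder (A : GraphAction Γ G) (Δ : Subgroup Γ) (x : G.V) : ℕ :=
  Nat.card {γ : Γ // γ ∈ Δ ∧ A.actV γ x = x}

/-- The vertical multiplicity of a vertex `x`: the number of `Δ`-vertical edges
incident to `x`. -/
noncomputable def vertMult (A : GraphAction Γ G) (Δ : Subgroup Γ) (x : G.V) : ℕ :=
  Nat.card {e : G.E // x ∈ G.ends e ∧ A.Vertical Δ e}

/-- `r_y = |Δ_x|` for a vertex `y` of the quotient `G/Δ` and any `x` in the fiber over `y`. -/
noncomputable def r (A : GraphAction Γ G) (Δ : Subgroup Γ) (y : A.quotV Δ) : ℕ :=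
  A.stabOrder Δ (Quotient.out y)

/-- `w_y = v(x)/|Δ_x|` for a vertex `y` of the quotient `G/Δ` and any `x` in the fiber. -/
noncomputable def w (A : GraphAction Γ G) (Δ : Subgroup Γ) (y : A.quotV Δ) : ℕ :=
  A.vertMult Δ (Quotient.out y) / A.r Δ y

/-- The ramification number `R = Σ_y [2(1 - 1/r_y) + w_y]` of the quotient map `G → G/Δ`. -/
noncomputable def ram (A : GraphAction Γ G) (Δ : Subgroup Γ) : ℚ :=
  ∑ᶠ y : A.quotV Δ, (2 * (1 - 1 / (A.r Δ y : ℚ)) + (A.w Δ y : ℚ))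

/-- A vertex `y` of the quotient `G/Δ` is a branch point if `2(1 - 1/r_y) + w_y > 0`. -/
def IsBranch (A : GraphAction Γ G) (Δ : Subgroup Γ) (y : A.quotV Δ) : Prop :=
  0 < 2 * (1 - 1 / (A.r Δ y : ℚ)) + (A.w Δ y : ℚ)

/-- The quotient morphism `φ_Δ : G → G/Δ` is harmonic: for every vertex `x` of `G` and
every pair of quotient edges incident to the image of `x`, the numbers of preimages
incident to `x` agree. -/
def QuotHarmonic (A : GraphAction Γ G) (Δ : Subgroup Γ) : Prop :=
  ∀ (x : G.V) (e₁ e₂ : G.E), ¬ A.Vertical Δ e₁ → ¬ A.Vertical Δ e₂ →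
    (∃ v ∈ G.ends e₁, A.vrel Δ x v) → (∃ v ∈ G.ends e₂, A.vrel Δ x v) →
    Nat.card {e : G.E // x ∈ G.ends e ∧ A.erel Δ e e₁} =
    Nat.card {e : G.E // x ∈ G.ends e ∧ A.erel Δ e e₂}

/-- The quotient morphism `φ_Δ : G → G/Δ` is non-degenerate: no neighborhood `x(1)` is
contracted to a vertex, i.e. every vertex has a neighbor outside its `Δ`-orbit. -/
def QuotNondeg (A : GraphAction Γ G) (Δ : Subgroup Γ) : Prop :=
  ∀ x : G.V, ∃ e : G.E, x ∈ G.ends e ∧ ∃ y ∈ G.ends e, ¬ A.vrel Δ x y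

/-- `Γ` acts harmonically on `G` if for every subgroup `Δ ≤ Γ` the quotient morphism
`φ_Δ : G → G/Δ` is harmonic and non-degenerate. -/
def ActsHarmonically (A : GraphAction Γ G) : Prop :=
  ∀ Δ : Subgroup Γ, A.QuotHarmonic Δ ∧ A.QuotNondeg Δ

/-- The quotient map `G → G/Δ` is horizontally unramified: all vertex stabilizers in `Δ`
are trivial. -/
def HorizUnramified (A : GraphAction Γ G) (Δ : Subgroup Γ) : Prop :=
  ∀ (x : G.V) (γ : Γ), γ ∈ Δ → A.actV γ x = x → γ = 1

end GraphAction

/-- `M g` is the maximal order of a group acting harmonically on a graph of genus `g`. -/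
noncomputable def M (g : ℕ) : ℕ :=
  sSup {n : ℕ | ∃ (Γ : Type) (i : Group Γ) (G : Multigraph) (A : @GraphAction Γ i G),
    @GraphAction.ActsHarmonically Γ i G A ∧ G.genus = (g : ℤ) ∧ Nat.card Γ = n}


section Aux

open Finset

variable {G₁ G₂ G₃ : Multigraph}

lemma vmap_eq_of_vertical (φ : Morphism G₁ G₂) {e : G₁.E} {v : G₂.V} {a b : G₁.V}
    (h : φ.emap e = Sum.inr v) (hab : G₁.ends e = s(a, b)) : φ.vmap a = φ.vmap b := by
  have h2 := (φ.compat e).2 v h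
  rw [hab, Sym2.map_pair_eq, Sym2.diag] at h2
  rcases Sym2.eq_iff.mp h2 with ⟨h1, h2⟩ | ⟨h1, h2⟩ <;> rw [h1, h2]

lemma count_pos_aux (φ : Morphism G₁ G₂) (hφ : φ.Harmonic) {x₁ : G₁.V}
    (h : ∃ e e₂', x₁ ∈ G₁.ends e ∧ φ.emap e = Sum.inl e₂') {f₂ : G₂.E}
    (hf : φ.vmap x₁ ∈ G₂.ends f₂) :
    0 < Nat.card {e : G₁.E // x₁ ∈ G₁.ends e ∧ φ.emap e = Sum.inl f₂} := by
  obtain ⟨e0, e₂0, hx, hmap⟩ := h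
  have hinc : φ.vmap x₁ ∈ G₂.ends e₂0 := by
    rw [(φ.compat e0).1 e₂0 hmap]
    exact Sym2.mem_map.mpr ⟨x₁, hx, rfl⟩
  rw [hφ x₁ f₂ e₂0 hf hinc]
  have : Nonempty {e : G₁.E // x₁ ∈ G₁.ends e ∧ φ.emap e = Sum.inl e₂0} := ⟨⟨e0, hx, hmap⟩⟩
  exact Nat.card_pos

lemma surj_aux (φ : Morphism G₁ G₂) (hφ : φ.Harmonic) (hnc : φ.Nonconstant) (x₂ : G₂.V) :
    ∃ x₁, φ.vmap x₁ = x₂ ∧ ∃ e e₂', x₁ ∈ G₁.ends e ∧ φ.emap e = Sum.inl e₂' := by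
  have step1 : ∃ (x₁ : G₁.V) (e : G₁.E) (e₂' : G₂.E),
      x₁ ∈ G₁.ends e ∧ φ.emap e = Sum.inl e₂' := by
    by_contra hcon
    push_neg at hcon
    obtain ⟨a, b, hab⟩ := hnc
    apply hab
    have key : ∀ {u v : G₁.V},
        (SimpleGraph.fromRel fun x y : G₁.V => ∃ e : G₁.E, G₁.ends e = s(x, y)).Walk u v →
        φ.vmap u = φ.vmap v := by
      intro u v p
      induction p with
      | nil => rfl
      | @cons u' w' v' h p ih =>
        rw [← ih]
        rw [SimpleGraph.fromRel_adj] at h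
        obtain ⟨hne, hor⟩ := h
        have hee : ∃ e : G₁.E, G₁.ends e = s(u', w') := by
          rcases hor with ⟨e, he⟩ | ⟨e, he⟩
          · exact ⟨e, he⟩
          · exact ⟨e, by rw [he, Sym2.eq_swap]⟩
        obtain ⟨e, he⟩ := hee
        rcases hm : φ.emap e with e₂' | v0
        · exact absurd hm (hcon u' e e₂' (by rw [he]; exact Sym2.mem_mk_left _ _))
        · exact vmap_eq_of_vertical φ hm he
    exact key (G₁.connected.preconnected a b).some
  obtain ⟨x0, e0, e₂0, hx0, he0⟩ := step1
  have step : ∀ {u v : G₂.V},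
      (SimpleGraph.fromRel fun x y : G₂.V => ∃ e : G₂.E, G₂.ends e = s(x, y)).Adj u v →
      (∃ x₁, φ.vmap x₁ = u ∧ ∃ e e₂', x₁ ∈ G₁.ends e ∧ φ.emap e = Sum.inl e₂') →
      (∃ x₁, φ.vmap x₁ = v ∧ ∃ e e₂', x₁ ∈ G₁.ends e ∧ φ.emap e = Sum.inl e₂') := by
    intro u v hadj hu
    rw [SimpleGraph.fromRel_adj] at hadj
    obtain ⟨hne, hor⟩ := hadj
    have hfex : ∃ f₂ : G₂.E, G₂.ends f₂ = s(u, v) := by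
      rcases hor with ⟨f, hfe⟩ | ⟨f, hfe⟩
      · exact ⟨f, hfe⟩
      · exact ⟨f, by rw [hfe, Sym2.eq_swap]⟩
    obtain ⟨f₂, hf₂⟩ := hfex
    obtain ⟨x₁, hx₁, hnv⟩ := hu
    have hpos := count_pos_aux φ hφ hnv (f₂ := f₂)
      (by rw [hx₁, hf₂]; exact Sym2.mem_mk_left _ _)
    have hne' : Nonempty {e : G₁.E // x₁ ∈ G₁.ends e ∧ φ.emap e = Sum.inl f₂} :=
      (Nat.card_pos_iff.mp hpos).1
    obtain ⟨e, hxe, hemap⟩ := hne'.some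
    obtain ⟨y₁, hy₁⟩ := Sym2.mem_iff_exists.mp hxe
    have hends := (φ.compat e).1 f₂ hemap
    rw [hy₁, Sym2.map_pair_eq, hx₁, hf₂] at hends
    rcases Sym2.eq_iff.mp hends with ⟨h1, h2⟩ | ⟨h1, h2⟩
    · exact ⟨y₁, h2.symm, e, f₂, by rw [hy₁]; exact Sym2.mem_mk_right _ _, hemap⟩
    · exact absurd h2.symm hne
  have key : ∀ {u v : G₂.V},
      (SimpleGraph.fromRel fun x y : G₂.V => ∃ e : G₂.E, G₂.ends e = s(x, y)).Walk u v →
      (∃ x₁, φ.vmap x₁ = u ∧ ∃ e e₂', x₁ ∈ G₁.ends e ∧ φ.emap e = Sum.inl e₂') →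
      (∃ x₁, φ.vmap x₁ = v ∧ ∃ e e₂', x₁ ∈ G₁.ends e ∧ φ.emap e = Sum.inl e₂') := by
    intro u v p
    induction p with
    | nil => exact id
    | cons h p ih => exact fun hu => ih (step h hu)
  exact key (G₂.connected.preconnected (φ.vmap x0) x₂).some ⟨x0, rfl, e0, e₂0, hx0, he0⟩

open Finset in
lemma count_comp_aux (φ : Morphism G₁ G₂) (ψ : Morphism G₂ G₃) (x₁ : G₁.V) (e₃ : G₃.E) :
    (Finset.univ.filter fun e : G₁.E =>
        x₁ ∈ G₁.ends e ∧ (ψ.comp φ).emap e = Sum.inl e₃).card =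
    ∑ e₂ ∈ Finset.univ.filter
        (fun e₂ : G₂.E => φ.vmap x₁ ∈ G₂.ends e₂ ∧ ψ.emap e₂ = Sum.inl e₃),
      (Finset.univ.filter fun e : G₁.E =>
        x₁ ∈ G₁.ends e ∧ φ.emap e = Sum.inl e₂).card := by
  classical
  set T : Finset G₂.E := Finset.univ.filter
    (fun e₂ : G₂.E => φ.vmap x₁ ∈ G₂.ends e₂ ∧ ψ.emap e₂ = Sum.inl e₃) with hT
  set S : Finset G₁.E := Finset.univ.filter
    (fun e => x₁ ∈ G₁.ends e ∧ (ψ.comp φ).emap e = Sum.inl e₃) with hS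
  have hmap : ∀ e ∈ S, φ.emap e ∈ T.image Sum.inl := by
    intro e he
    simp only [hS, mem_filter, mem_univ, true_and] at he
    obtain ⟨hxe, hρe⟩ := he
    rcases hm : φ.emap e with e₂ | v
    · have hψ : ψ.emap e₂ = Sum.inl e₃ := by
        simpa [Morphism.comp, hm] using hρe
      have hinc : φ.vmap x₁ ∈ G₂.ends e₂ := by
        rw [(φ.compat e).1 e₂ hm]; exact Sym2.mem_map.mpr ⟨x₁, hxe, rfl⟩
      exact mem_image_of_mem _ (by simp [hT, hinc, hψ])
    · exfalso; simp [Morphism.comp, hm] at hρe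
  rw [Finset.card_eq_sum_card_fiberwise hmap,
    Finset.sum_image (fun a _ b _ h => Sum.inl_injective h)]
  refine Finset.sum_congr rfl ?_
  intro e₂ he₂
  simp only [hT, mem_filter, mem_univ, true_and] at he₂
  congr 1
  ext e
  simp only [hS, mem_filter, mem_univ, true_and, Finset.mem_filter]
  constructor
  · rintro ⟨⟨hx, -⟩, hm⟩; exact ⟨hx, hm⟩
  · rintro ⟨hx, hm⟩
    refine ⟨⟨hx, ?_⟩, hm⟩
    simp [Morphism.comp, hm, he₂.2]

end Aux

/-- If `φ : G₁ → G₂` is a nonconstant harmonic morphism and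
`ψ : G₂ → G₃` is a morphism such that `ρ := ψ ∘ φ` is harmonic, then `ψ` is harmonic. -/
theorem harmonic_of_comp_harmonic {G₁ G₂ G₃ : Multigraph}
    (φ : Morphism G₁ G₂) (ψ : Morphism G₂ G₃)
    (hφ : φ.Harmonic) (hφnc : φ.Nonconstant) (hρ : (ψ.comp φ).Harmonic) :
    ψ.Harmonic := by
  intro x₂ e₁ e₂ h1 h2
  classical
  obtain ⟨x₁, hx₁, hnv⟩ := surj_aux φ hφ hφnc x₂
  obtain ⟨e0, e₂0, hx0, he0⟩ := hnv
  set m := (Finset.univ.filter fun e : G₁.E =>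
    x₁ ∈ G₁.ends e ∧ φ.emap e = Sum.inl e₂0).card with hm
  have hminc : φ.vmap x₁ ∈ G₂.ends e₂0 := by
    rw [(φ.compat e0).1 e₂0 he0]; exact Sym2.mem_map.mpr ⟨x₁, hx0, rfl⟩
  have hmpos : 0 < m := Finset.card_pos.mpr ⟨e0, by simp [hx0, he0]⟩
  have hconst : ∀ f₂ : G₂.E, φ.vmap x₁ ∈ G₂.ends f₂ →
      (Finset.univ.filter fun e : G₁.E =>
        x₁ ∈ G₁.ends e ∧ φ.emap e = Sum.inl f₂).card = m := by
    intro f₂ hf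
    have h := hφ x₁ f₂ e₂0 hf hminc
    rw [Nat.card_eq_fintype_card, Nat.card_eq_fintype_card, Fintype.card_subtype,
      Fintype.card_subtype] at h
    exact h
  have hS : ∀ e₃ : G₃.E,
      (Finset.univ.filter fun e : G₁.E =>
        x₁ ∈ G₁.ends e ∧ (ψ.comp φ).emap e = Sum.inl e₃).card =
      (Finset.univ.filter fun f₂ : G₂.E =>
        φ.vmap x₁ ∈ G₂.ends f₂ ∧ ψ.emap f₂ = Sum.inl e₃).card * m := by
    intro e₃
    rw [count_comp_aux φ ψ x₁ e₃,
      Finset.sum_congr rfl (fun f₂ hf₂ => hconst f₂ (Finset.mem_filter.mp hf₂).2.1),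
      Finset.sum_const, smul_eq_mul]
  have hρx : (ψ.comp φ).vmap x₁ = ψ.vmap x₂ := by
    simp [Morphism.comp, hx₁]
  have h12 := hρ x₁ e₁ e₂ (by rw [hρx]; exact h1) (by rw [hρx]; exact h2)
  rw [Nat.card_eq_fintype_card, Nat.card_eq_fintype_card, Fintype.card_subtype,
    Fintype.card_subtype, hS e₁, hS e₂] at h12
  have hfin := Nat.eq_of_mul_eq_mul_right hmpos h12
  rw [Nat.card_eq_fintype_card, Nat.card_eq_fintype_card, Fintype.card_subtype,
    Fintype.card_subtype, ← hx₁]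
  exact hfin
end

section
/- Let Γ be a group of automorphisms of a graph G. Then Γ acts harmonically on G if and only if for every vertex x of G, the stabilizer subgroup Γ_x acts freely on the set E(x(1)) of edges incident to x, and the vertex set V(x(1)) is not contained in the orbit Γx. -/
open scoped Classical

namespace GraphAction

variable {Γ : Type} [Group Γ] {G : Multigraph} (A : GraphAction Γ G)

lemma vrel_refl (Δ : Subgroup Γ) (x : G.V) : A.vrel Δ x x :=
  ⟨1, Δ.one_mem, by simp⟩

lemma ne_of_ends {e : G.E} {v w : G.V} (h : G.ends e = s(v, w)) : v ≠ w := by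
  intro hvw
  exact G.loopless e (by rw [h, hvw]; exact Sym2.mk_isDiag_iff.mpr rfl)

lemma actV_inv_fix {γ : Γ} {v : G.V} (hv : A.actV γ v = v) : A.actV γ⁻¹ v = v := by
  rw [map_inv]
  exact (A.actV γ).injective (by rw [Equiv.Perm.inv_def, Equiv.apply_symm_apply, hv])

lemma mem_ends_act {γ : Γ} {e : G.E} {v : G.V} (h : v ∈ G.ends e) :
    A.actV γ v ∈ G.ends (A.actE γ e) := by
  rw [A.ends_map]
  exact Sym2.mem_map.mpr ⟨v, h, rfl⟩

/-- If `γ` fixes a vertex `v` and an edge `e` with ends `s(v,w)`, it fixes `w`. -/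
lemma fix_other {γ : Γ} {e : G.E} {v w : G.V} (hv : A.actV γ v = v)
    (he : A.actE γ e = e) (hends : G.ends e = s(v, w)) : A.actV γ w = w := by
  have h := A.ends_map γ e
  rw [he, hends, Sym2.map_pair_eq, hv] at h
  rcases Sym2.eq_iff.mp h with ⟨_, h2⟩ | ⟨h1, h2⟩
  · exact h2.symm
  · exact absurd h2.symm (ne_of_ends hends)

/-- Verticality is invariant along edge orbits. -/
lemma vertical_of_erel {Δ : Subgroup Γ} {e f : G.E} (hef : A.erel Δ e f)
    (hv : A.Vertical Δ e) : A.Vertical Δ f := by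
  obtain ⟨δ, hδ, rfl⟩ := hef
  obtain ⟨a, b, hab, δ', hδ', hδ'ab⟩ := hv
  refine ⟨A.actV δ a, A.actV δ b, ?_, δ * δ' * δ⁻¹, Δ.mul_mem (Δ.mul_mem hδ hδ') (Δ.inv_mem hδ), ?_⟩
  · rw [A.ends_map, hab, Sym2.map_pair_eq]
  · rw [map_mul, map_mul, Equiv.Perm.mul_apply, Equiv.Perm.mul_apply, map_inv,
      Equiv.Perm.inv_def, Equiv.symm_apply_apply, hδ'ab]

/-- Key lemma for the forward direction: if the action is harmonic, `γ` fixes a vertex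
`v` and some edge `f` incident to `v`, then `γ` fixes every edge incident to `v`. -/
lemma fix_all_at (H : A.ActsHarmonically) {γ : Γ} {v : G.V} {f : G.E}
    (hv : A.actV γ v = v) (hvf : v ∈ G.ends f) (hf : A.actE γ f = f) :
    ∀ g : G.E, v ∈ G.ends g → A.actE γ g = g := by
  intro g hvg
  set Δ := Subgroup.zpowers γ with hΔ
  have hpowV : ∀ δ ∈ Δ, A.actV δ v = v := by
    rintro δ ⟨k, rfl⟩
    rw [map_zpow]
    exact Equiv.Perm.zpow_apply_eq_self_of_apply_eq_self hv k
  have hpowE : ∀ δ ∈ Δ, A.actE δ f = f := by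
    rintro δ ⟨k, rfl⟩
    rw [map_zpow]
    exact Equiv.Perm.zpow_apply_eq_self_of_apply_eq_self hf k
  -- no edge at v is Δ-vertical
  have hnv : ∀ e : G.E, v ∈ G.ends e → ¬ A.Vertical Δ e := by
    rintro e hve ⟨a, b, hab, δ, hδ, hδab⟩
    have hane : a ≠ b := ne_of_ends hab
    rw [hab] at hve
    rcases Sym2.mem_iff.mp hve with hva | hvb
    · exact hane (by rw [← hδab, ← hva, hpowV δ hδ, hva])
    · have hinv : A.actV δ⁻¹ v = v := by
        rcases hδ with ⟨k, rfl⟩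
        rw [map_inv, map_zpow]
        exact Equiv.Perm.inv_eq_iff_eq.mpr
          (Equiv.Perm.zpow_apply_eq_self_of_apply_eq_self hv k).symm
      refine hane ?_
      calc a = A.actV δ⁻¹ (A.actV δ a) := by rw [map_inv, Equiv.Perm.inv_def, Equiv.symm_apply_apply]
        _ = A.actV δ⁻¹ v := by rw [hδab, hvb]
        _ = v := hinv
        _ = b := hvb
  -- the count for f is 1
  have cardf : Nat.card {h : G.E // v ∈ G.ends h ∧ A.erel Δ h f} = 1 := by
    rw [Nat.card_eq_one_iff_unique]
    constructor
    · constructor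
      rintro ⟨h₁, _, δ, hδ, hδ1⟩ ⟨h₂, _, δ', hδ', hδ2⟩
      have e1 : h₁ = f := (A.actE δ).injective (by rw [hδ1, hpowE δ hδ])
      have e2 : h₂ = f := (A.actE δ').injective (by rw [hδ2, hpowE δ' hδ'])
      simp [e1, e2]
    · exact ⟨⟨f, hvf, 1, Δ.one_mem, by simp⟩⟩
  have cardg := (H Δ).1 v f g (hnv f hvf) (hnv g hvg)
    ⟨v, hvf, A.vrel_refl Δ v⟩ ⟨v, hvg, A.vrel_refl Δ v⟩
  rw [cardf] at cardg
  have hsub : Subsingleton {h : G.E // v ∈ G.ends h ∧ A.erel Δ h g} :=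
    (Nat.card_eq_one_iff_unique.mp cardg.symm).1
  have m1 : v ∈ G.ends (A.actE γ⁻¹ g) := by
    have : A.actV γ⁻¹ v = v := A.actV_inv_fix hv
    rw [← this]
    exact A.mem_ends_act hvg
  have m2 : A.erel Δ (A.actE γ⁻¹ g) g := by
    refine ⟨γ, ⟨1, by simp⟩, ?_⟩
    rw [map_inv, Equiv.Perm.inv_def, Equiv.apply_symm_apply]
  have := hsub.elim ⟨A.actE γ⁻¹ g, m1, m2⟩ ⟨g, hvg, 1, Δ.one_mem, by simp⟩
  have hinv : A.actE γ⁻¹ g = g := congrArg Subtype.val this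
  have := congrArg (A.actE γ) hinv
  rw [map_inv, Equiv.Perm.inv_def, Equiv.apply_symm_apply] at this
  exact this.symm

/-- Forward direction: harmonic actions have free stabilizer actions on stars. -/
lemma eq_one_of_fix (H : A.ActsHarmonically) {γ : Γ} {x : G.V} {e : G.E}
    (hx : A.actV γ x = x) (hxe : x ∈ G.ends e) (he : A.actE γ e = e) : γ = 1 := by
  set P : G.V → Prop := fun v =>
    A.actV γ v = v ∧ ∃ f : G.E, v ∈ G.ends f ∧ A.actE γ f = f with hP
  have step : ∀ v w : G.V, P v →
      (SimpleGraph.fromRel fun a b : G.V => ∃ e : G.E, G.ends e = s(a, b)).Adj v w →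
      P w := by
    rintro v w ⟨hv, f, hvf, hf⟩ hadj
    rw [SimpleGraph.fromRel_adj] at hadj
    obtain ⟨hne, h | h⟩ := hadj
    · obtain ⟨e', he'⟩ := h
      have hve' : v ∈ G.ends e' := by rw [he']; exact Sym2.mem_mk_left _ _
      have hfix : A.actE γ e' = e' := A.fix_all_at H hv hvf hf e' hve'
      have hw : A.actV γ w = w := A.fix_other hv hfix he'
      exact ⟨hw, e', by rw [he']; exact Sym2.mem_mk_right _ _, hfix⟩
    · obtain ⟨e', he'⟩ := h
      have he'' : G.ends e' = s(v, w) := by rw [he', Sym2.eq_swap]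
      have hve' : v ∈ G.ends e' := by rw [he'']; exact Sym2.mem_mk_left _ _
      have hfix : A.actE γ e' = e' := A.fix_all_at H hv hvf hf e' hve'
      have hw : A.actV γ w = w := A.fix_other hv hfix he''
      exact ⟨hw, e', by rw [he'']; exact Sym2.mem_mk_right _ _, hfix⟩
  have main : ∀ u : G.V, P u := by
    intro u
    obtain ⟨wk⟩ := G.connected.preconnected x u
    have : ∀ {a b : G.V},
        (SimpleGraph.fromRel fun a b : G.V => ∃ e : G.E, G.ends e = s(a, b)).Walk a b →
        P a → P b := by
      intro a b wk
      induction wk with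
      | nil => exact id
      | cons h _ ih => exact fun ha => ih (step _ _ ha h)
    exact this wk ⟨hx, e, hxe, he⟩
  refine A.faithful γ (fun v => (main v).1) (fun g => ?_)
  have hmem := Sym2.out_fst_mem (G.ends g)
  obtain ⟨hv, f, hvf, hf⟩ := main (G.ends g).out.1
  exact A.fix_all_at H hv hvf hf g hmem

/-- Backward direction core: the count of edges at `x` in the orbit of a non-vertical
edge `e'` whose orbit meets the star of `x` equals the order of the stabilizer. -/
lemma card_star_orbit (Δ : Subgroup Γ) (x : G.V)
    (hfree : ∀ (γ : Γ) (e : G.E), A.actV γ x = x → x ∈ G.ends e → A.actE γ e = e → γ = 1)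
    {e' : G.E} (hnv : ¬ A.Vertical Δ e') (h : ∃ v ∈ G.ends e', A.vrel Δ x v) :
    Nat.card {e : G.E // x ∈ G.ends e ∧ A.erel Δ e e'} =
      Nat.card {γ : Γ // γ ∈ Δ ∧ A.actV γ x = x} := by
  obtain ⟨v, hv, δ₀, hδ₀, hδ₀x⟩ := h
  obtain ⟨e₀, he₀⟩ : ∃ e₀ : G.E, A.actE δ₀ e₀ = e' :=
    ⟨A.actE δ₀⁻¹ e', by rw [map_inv, Equiv.Perm.inv_def, Equiv.apply_symm_apply]⟩
  have hxe₀ : x ∈ G.ends e₀ := by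
    have h1 : A.actV δ₀⁻¹ v = x := by
      rw [← hδ₀x, map_inv, Equiv.Perm.inv_def, Equiv.symm_apply_apply]
    have h2 : v ∈ G.ends (A.actE δ₀ e₀) := by rw [he₀]; exact hv
    rw [A.ends_map] at h2
    obtain ⟨a, ha, hav⟩ := Sym2.mem_map.mp h2
    have : a = x := by rw [← h1, ← hav, map_inv, Equiv.Perm.inv_def, Equiv.symm_apply_apply]
    rwa [← this]
  have here₀ : A.erel Δ e₀ e' := ⟨δ₀, hδ₀, he₀⟩
  refine (Nat.card_congr (Equiv.ofBijective
    (fun p : {γ : Γ // γ ∈ Δ ∧ A.actV γ x = x} =>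
      (⟨A.actE p.1 e₀, by
        have hm := A.mem_ends_act (γ := p.1) hxe₀; rwa [p.2.2] at hm, δ₀ * p.1⁻¹,
        Δ.mul_mem hδ₀ (Δ.inv_mem p.2.1), by
          rw [map_mul, Equiv.Perm.mul_apply, map_inv, Equiv.Perm.inv_def, Equiv.symm_apply_apply, he₀]⟩ :
        {e : G.E // x ∈ G.ends e ∧ A.erel Δ e e'})) ⟨?_, ?_⟩)).symm
  · rintro ⟨γ, hγ, hγx⟩ ⟨γ', hγ', hγ'x⟩ hEq
    have hEq' : A.actE γ e₀ = A.actE γ' e₀ := congrArg Subtype.val hEq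
    have h1 : A.actE (γ'⁻¹ * γ) e₀ = e₀ := by
      rw [map_mul, Equiv.Perm.mul_apply, hEq', map_inv, Equiv.Perm.inv_def, Equiv.symm_apply_apply]
    have h2 : A.actV (γ'⁻¹ * γ) x = x := by
      rw [map_mul, Equiv.Perm.mul_apply, hγx, A.actV_inv_fix hγ'x]
    have := hfree _ _ h2 hxe₀ h1
    exact Subtype.ext (inv_mul_eq_one.mp this).symm
  · rintro ⟨f, hxf, δ, hδ, hδf⟩
    have hγΔ : δ⁻¹ * δ₀ ∈ Δ := Δ.mul_mem (Δ.inv_mem hδ) hδ₀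
    have hγe₀ : A.actE (δ⁻¹ * δ₀) e₀ = f := by
      rw [map_mul, Equiv.Perm.mul_apply, he₀, ← hδf, map_inv, Equiv.Perm.inv_def, Equiv.symm_apply_apply]
    obtain ⟨z, hz⟩ := Sym2.mem_iff_exists.mp hxe₀
    have hendsf : G.ends f = s(A.actV (δ⁻¹ * δ₀) x, A.actV (δ⁻¹ * δ₀) z) := by
      rw [← hγe₀, A.ends_map, hz, Sym2.map_pair_eq]
    have hxmem : x = A.actV (δ⁻¹ * δ₀) x ∨ x = A.actV (δ⁻¹ * δ₀) z := by
      rw [hendsf] at hxf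
      exact Sym2.mem_iff.mp hxf
    rcases hxmem with hh | hh
    · exact ⟨⟨δ⁻¹ * δ₀, hγΔ, hh.symm⟩, Subtype.ext hγe₀⟩
    · exact absurd (A.vertical_of_erel here₀
        ⟨z, x, by rw [hz, Sym2.eq_swap], δ⁻¹ * δ₀, hγΔ, hh.symm⟩) hnv

end GraphAction

/-- `Γ` acts harmonically on `G` iff for every vertex `x`, the stabilizer
`Γ_x` acts freely on the edges incident to `x`, and the vertex set of `x(1)` is not
contained in the orbit `Γx`. -/
theorem actsHarmonically_iff {Γ : Type} [Group Γ] {G : Multigraph} (A : GraphAction Γ G) :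
    A.ActsHarmonically ↔
      ∀ x : G.V,
        (∀ (γ : Γ) (e : G.E), A.actV γ x = x → x ∈ G.ends e → A.actE γ e = e → γ = 1) ∧
        (∃ e : G.E, x ∈ G.ends e ∧ ∃ y ∈ G.ends e, ¬ ∃ γ : Γ, A.actV γ x = y) := by
  constructor
  · intro H x
    constructor
    · intro γ e hx hxe he
      exact A.eq_one_of_fix H hx hxe he
    · obtain ⟨e, hxe, y, hy, hnrel⟩ := (H ⊤).2 x
      exact ⟨e, hxe, y, hy, fun ⟨γ, hγ⟩ => hnrel ⟨γ, trivial, hγ⟩⟩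
  · intro H Δ
    constructor
    · intro x e₁ e₂ hnv₁ hnv₂ h₁ h₂
      rw [A.card_star_orbit Δ x (H x).1 hnv₁ h₁, A.card_star_orbit Δ x (H x).1 hnv₂ h₂]
    · intro x
      obtain ⟨e, hxe, y, hy, hny⟩ := (H x).2
      exact ⟨e, hxe, y, hy, fun ⟨γ, _, hγ⟩ => hny ⟨γ, hγ⟩⟩
end

section
/- Suppose a group Γ acts harmonically on a graph G with ramification number R satisfying 0 < R < 2. Then there is exactly one branch point y in G/Γ, and either r_y ≥ 2 and w_y = 0, or r_y = w_y = 1. -/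
open scoped Classical

private lemma aux_nonneg (r w : ℕ) : 0 ≤ 2 * (1 - 1 / (r : ℚ)) + (w : ℚ) := by
  have hw : (0:ℚ) ≤ w := Nat.cast_nonneg w
  rcases Nat.eq_zero_or_pos r with h | h
  · subst h; simp; linarith
  · have hr : (1:ℚ) ≤ r := by exact_mod_cast h
    have : 1 / (r:ℚ) ≤ 1 := by
      rw [div_le_one (by linarith)]; linarith
    linarith

private lemma aux_classify (r w : ℕ) (h1 : 0 < 2 * (1 - 1 / (r : ℚ)) + (w : ℚ))
    (h2 : 2 * (1 - 1 / (r : ℚ)) + (w : ℚ) < 2) :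
    (2 ≤ r ∧ w = 0) ∨ (r = 1 ∧ w = 1) := by
  have hw : (0:ℚ) ≤ w := Nat.cast_nonneg w
  match r with
  | 0 => simp at h2; linarith
  | 1 =>
    right
    refine ⟨rfl, ?_⟩
    simp only [Nat.cast_one] at h1 h2
    norm_num at h1 h2
    have hw1 : 0 < w := by exact_mod_cast h1
    have hw2 : w < 2 := by have h2' : w ≤ 1 := by exact_mod_cast h2
                           omega
    omega
  | (n+2) =>
    left
    refine ⟨by omega, ?_⟩
    have hr : (2:ℚ) ≤ ((n+2 : ℕ) : ℚ) := by exact_mod_cast (by omega : 2 ≤ n + 2)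
    have hinv : 1 / ((n+2 : ℕ) : ℚ) ≤ 1 / 2 := by
      rw [div_le_div_iff₀ (by linarith) (by norm_num)]; linarith
    have : (w:ℚ) < 1 := by linarith
    have : w < 1 := by exact_mod_cast this
    omega

private lemma aux_ge_one (r w : ℕ) (h : (2 ≤ r ∧ w = 0) ∨ (r = 1 ∧ w = 1)) :
    (1:ℚ) ≤ 2 * (1 - 1 / (r : ℚ)) + (w : ℚ) := by
  rcases h with ⟨hr, hw⟩ | ⟨hr, hw⟩
  · subst hw
    have hr' : (2:ℚ) ≤ r := by exact_mod_cast hr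
    have hinv : 1 / (r:ℚ) ≤ 1 / 2 := by
      rw [div_le_div_iff₀ (by linarith) (by norm_num)]; linarith
    push_cast
    linarith
  · subst hr; subst hw; norm_num

/-- If `Γ` acts harmonically on `G` with `0 < R < 2`, then there is a
single branch point `y`, and either `r_y ≥ 2` and `w_y = 0`, or `r_y = w_y = 1`. -/
theorem branch_of_ram_lt_two {Γ : Type} [Group Γ] {G : Multigraph} (A : GraphAction Γ G)
    (hA : A.ActsHarmonically) (h0 : 0 < A.ram ⊤) (h2 : A.ram ⊤ < 2) :
    (∃! y : A.quotV ⊤, A.IsBranch ⊤ y) ∧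
    ∀ y : A.quotV ⊤, A.IsBranch ⊤ y →
      (2 ≤ A.r ⊤ y ∧ A.w ⊤ y = 0) ∨ (A.r ⊤ y = 1 ∧ A.w ⊤ y = 1) := by
  classical
  haveI : Fintype (A.quotV (⊤ : Subgroup Γ)) := Fintype.ofFinite _
  set t : A.quotV (⊤ : Subgroup Γ) → ℚ :=
    fun y => 2 * (1 - 1 / (A.r ⊤ y : ℚ)) + (A.w ⊤ y : ℚ) with ht
  have hsum : A.ram ⊤ = ∑ y, t y := finsum_eq_sum_of_fintype _
  have hnn : ∀ y, 0 ≤ t y := fun y => aux_nonneg _ _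
  have hle : ∀ y, t y ≤ A.ram ⊤ := by
    intro y
    rw [hsum]
    exact Finset.single_le_sum (fun i _ => hnn i) (Finset.mem_univ y)
  have hclass : ∀ y, A.IsBranch ⊤ y →
      (2 ≤ A.r ⊤ y ∧ A.w ⊤ y = 0) ∨ (A.r ⊤ y = 1 ∧ A.w ⊤ y = 1) := by
    intro y hy
    exact aux_classify _ _ hy (lt_of_le_of_lt (hle y) h2)
  refine ⟨?_, hclass⟩
  have hexists : ∃ y, A.IsBranch ⊤ y := by
    by_contra h
    push_neg at h
    have : A.ram ⊤ ≤ 0 := by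
      rw [hsum]
      exact Finset.sum_nonpos fun y _ => le_of_not_gt (h y)
    linarith
  obtain ⟨y, hy⟩ := hexists
  refine ⟨y, hy, ?_⟩
  intro y' hy'
  by_contra hne
  have h1 : (1:ℚ) ≤ t y := aux_ge_one _ _ (hclass y hy)
  have h1' : (1:ℚ) ≤ t y' := aux_ge_one _ _ (hclass y' hy')
  have hsum2 : t y' + t y ≤ A.ram ⊤ := by
    rw [hsum]
    have h := Finset.sum_le_sum_of_subset_of_nonneg
      (Finset.subset_univ ({y', y} : Finset _)) (fun i _ _ => hnn i)
    rwa [Finset.sum_pair hne] at h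
  linarith
end

section
/- Suppose a group Γ acts harmonically on a graph G with ramification number R > 2. Then R ≥ 7/3, and R = 7/3 occurs in exactly three ways: (i) a single branch point with r = 3 and w = 1; (ii) two branch points with (r₁, r₂; w₁, w₂) = (3, 2; 0, 0); (iii) two branch points with (r₁, r₂; w₁, w₂) = (3, 1; 0, 1) (up to reordering of the branch points). -/
open scoped Classical

private lemma cast_two_eval : 2 * (1 - 1/((2:ℕ):ℚ)) = 1 := by norm_num
private lemma cast_one_eval : 2 * (1 - 1/((1:ℕ):ℚ)) = 0 := by norm_num
private lemma cast_zero_eval : 2 * (1 - 1/((0:ℕ):ℚ)) = 2 := by norm_num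
private lemma cast_three_eval : 2 * (1 - 1/((3:ℕ):ℚ)) = 4/3 := by norm_num

private lemma big_r {r : ℕ} (hr : 3 ≤ r) :
    0 < 1/(r:ℚ) ∧ 1/(r:ℚ) ≤ 1/3 := by
  have h0 : (0:ℚ) < r := by exact_mod_cast (show 0 < r by omega)
  have h3 : (3:ℚ) ≤ r := by exact_mod_cast hr
  exact ⟨by positivity, by rw [div_le_div_iff₀ h0 (by norm_num)]; linarith⟩

private lemma term_nonneg (r w : ℕ) : 0 ≤ 2 * (1 - 1/(r:ℚ)) + w := by
  have hw : (0:ℚ) ≤ w := Nat.cast_nonneg w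
  rcases (show r = 0 ∨ r = 1 ∨ r = 2 ∨ 3 ≤ r from by omega) with hr|hr|hr|hr
  · subst hr; rw [cast_zero_eval]; linarith
  · subst hr; rw [cast_one_eval]; linarith
  · subst hr; rw [cast_two_eval]; linarith
  · obtain ⟨hd0, hd⟩ := big_r hr; linarith

private lemma term_ge_one {r w : ℕ} (h : 0 < 2 * (1 - 1/(r:ℚ)) + w) :
    1 ≤ 2 * (1 - 1/(r:ℚ)) + w := by
  have hw : (0:ℚ) ≤ w := Nat.cast_nonneg w
  have hwcase : w = 0 ∨ (1:ℚ) ≤ w := by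
    rcases Nat.eq_zero_or_pos w with h'|h'
    · exact Or.inl h'
    · exact Or.inr (by exact_mod_cast h')
  rcases (show r = 0 ∨ r = 1 ∨ r = 2 ∨ 3 ≤ r from by omega) with hr|hr|hr|hr
  · subst hr; rw [cast_zero_eval]; linarith
  · subst hr; rw [cast_one_eval] at h ⊢
    rcases hwcase with h'|h'
    · exfalso; subst h'; simp only [Nat.cast_zero] at h; linarith
    · linarith
  · subst hr; rw [cast_two_eval]; linarith
  · obtain ⟨hd0, hd⟩ := big_r hr; linarith

private lemma term_ge_43 {r w : ℕ} (h : 1 < 2 * (1 - 1/(r:ℚ)) + w) :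
    4/3 ≤ 2 * (1 - 1/(r:ℚ)) + w := by
  have hw : (0:ℚ) ≤ w := Nat.cast_nonneg w
  have hwcase : w = 0 ∨ w = 1 ∨ (2:ℚ) ≤ w := by
    rcases (show w = 0 ∨ w = 1 ∨ 2 ≤ w from by omega) with h'|h'|h'
    · exact Or.inl h'
    · exact Or.inr (Or.inl h')
    · exact Or.inr (Or.inr (by exact_mod_cast h'))
  rcases (show r = 0 ∨ r = 1 ∨ r = 2 ∨ 3 ≤ r from by omega) with hr|hr|hr|hr
  · subst hr; rw [cast_zero_eval]; linarith
  · subst hr; rw [cast_one_eval] at h ⊢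
    rcases hwcase with h'|h'|h'
    · exfalso; subst h'; simp only [Nat.cast_zero] at h; linarith
    · exfalso; subst h'; simp only [Nat.cast_one] at h; linarith
    · linarith
  · subst hr; rw [cast_two_eval] at h ⊢
    rcases hwcase with h'|h'|h'
    · exfalso; subst h'; simp only [Nat.cast_zero] at h; linarith
    · subst h'; simp only [Nat.cast_one]; linarith
    · linarith
  · obtain ⟨hd0, hd⟩ := big_r hr; linarith

private lemma term_ge_73 {r w : ℕ} (h : 2 < 2 * (1 - 1/(r:ℚ)) + w) :
    7/3 ≤ 2 * (1 - 1/(r:ℚ)) + w := by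
  have hw : (0:ℚ) ≤ w := Nat.cast_nonneg w
  have hwcase : w = 0 ∨ w = 1 ∨ w = 2 ∨ (3:ℚ) ≤ w := by
    rcases (show w = 0 ∨ w = 1 ∨ w = 2 ∨ 3 ≤ w from by omega) with h'|h'|h'|h'
    · exact Or.inl h'
    · exact Or.inr (Or.inl h')
    · exact Or.inr (Or.inr (Or.inl h'))
    · exact Or.inr (Or.inr (Or.inr (by exact_mod_cast h')))
  have hw1 : w = 1 → (w:ℚ) = 1 := by intro h'; subst h'; simp
  have hw2 : w = 2 → (w:ℚ) = 2 := by intro h'; subst h'; simp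
  have hw0 : w = 0 → (w:ℚ) = 0 := by intro h'; subst h'; simp
  rcases (show r = 0 ∨ r = 1 ∨ r = 2 ∨ 3 ≤ r from by omega) with hr|hr|hr|hr
  · subst hr; rw [cast_zero_eval] at h ⊢
    rcases hwcase with h'|h'|h'|h'
    · exfalso; rw [hw0 h'] at h; linarith
    · rw [hw1 h']; linarith
    · rw [hw2 h']; linarith
    · linarith
  · subst hr; rw [cast_one_eval] at h ⊢
    rcases hwcase with h'|h'|h'|h'
    · exfalso; rw [hw0 h'] at h; linarith
    · exfalso; rw [hw1 h'] at h; linarith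
    · exfalso; rw [hw2 h'] at h; linarith
    · linarith
  · subst hr; rw [cast_two_eval] at h ⊢
    rcases hwcase with h'|h'|h'|h'
    · exfalso; rw [hw0 h'] at h; linarith
    · exfalso; rw [hw1 h'] at h; linarith
    · rw [hw2 h']; linarith
    · linarith
  · obtain ⟨hd0, hd⟩ := big_r hr
    rcases hwcase with h'|h'|h'|h'
    · exfalso; rw [hw0 h'] at h; linarith
    · rw [hw1 h']; linarith
    · rw [hw2 h']; linarith
    · linarith

private lemma term_eq_73 {r w : ℕ} (h : 2 * (1 - 1/(r:ℚ)) + w = 7/3) :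
    r = 3 ∧ w = 1 := by
  have hw : (0:ℚ) ≤ w := Nat.cast_nonneg w
  have hwcase : w = 0 ∨ w = 1 ∨ (2:ℚ) ≤ w := by
    rcases (show w = 0 ∨ w = 1 ∨ 2 ≤ w from by omega) with h'|h'|h'
    · exact Or.inl h'
    · exact Or.inr (Or.inl h')
    · exact Or.inr (Or.inr (by exact_mod_cast h'))
  have hw1 : w = 1 → (w:ℚ) = 1 := by intro h'; subst h'; simp
  have hw0 : w = 0 → (w:ℚ) = 0 := by intro h'; subst h'; simp
  rcases (show r = 0 ∨ r = 1 ∨ r = 2 ∨ 3 ≤ r from by omega) with hr|hr|hr|hr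
  · exfalso; subst hr; rw [cast_zero_eval] at h
    rcases hwcase with h'|h'|h'
    · rw [hw0 h'] at h; linarith
    · rw [hw1 h'] at h; linarith
    · linarith
  · exfalso; subst hr; rw [cast_one_eval] at h
    rcases hwcase with h'|h'|h'
    · rw [hw0 h'] at h; linarith
    · rw [hw1 h'] at h; linarith
    · have : (w:ℚ) ≤ 2 ∨ (3:ℚ) ≤ w := by
        rcases (show w ≤ 2 ∨ 3 ≤ w from by omega) with h''|h''
        · exact Or.inl (by exact_mod_cast h'')
        · exact Or.inr (by exact_mod_cast h'')
      rcases this with h''|h'' <;> linarith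
  · exfalso; subst hr; rw [cast_two_eval] at h
    rcases hwcase with h'|h'|h'
    · rw [hw0 h'] at h; linarith
    · rw [hw1 h'] at h; linarith
    · linarith
  · obtain ⟨hd0, hd⟩ := big_r hr
    have hww : w = 1 := by
      rcases hwcase with h'|h'|h'
      · exfalso; rw [hw0 h'] at h; linarith
      · exact h'
      · exfalso; linarith
    subst hww
    refine ⟨?_, rfl⟩
    simp only [Nat.cast_one] at h
    have hinv : 1/(r:ℚ) = 1/3 := by linarith
    have h0 : (0:ℚ) < r := by exact_mod_cast (show 0 < r by omega)
    have hr3 : (r:ℚ) = 3 := by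
      field_simp at hinv; linarith
    exact_mod_cast hr3

private lemma term_eq_one {r w : ℕ} (h : 2 * (1 - 1/(r:ℚ)) + w = 1) :
    (r = 2 ∧ w = 0) ∨ (r = 1 ∧ w = 1) := by
  have hw : (0:ℚ) ≤ w := Nat.cast_nonneg w
  rcases (show r = 0 ∨ r = 1 ∨ r = 2 ∨ 3 ≤ r from by omega) with hr|hr|hr|hr
  · exfalso; subst hr; rw [cast_zero_eval] at h; linarith
  · subst hr; rw [cast_one_eval] at h
    right; refine ⟨rfl, ?_⟩
    have : (w:ℚ) = 1 := by linarith
    exact_mod_cast this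
  · subst hr; rw [cast_two_eval] at h
    left; refine ⟨rfl, ?_⟩
    have : (w:ℚ) = 0 := by linarith
    exact_mod_cast this
  · exfalso; obtain ⟨hd0, hd⟩ := big_r hr; linarith

private lemma term_eq_43 {r w : ℕ} (h : 2 * (1 - 1/(r:ℚ)) + w = 4/3) :
    r = 3 ∧ w = 0 := by
  have hw : (0:ℚ) ≤ w := Nat.cast_nonneg w
  have hwcase : w = 0 ∨ (1:ℚ) ≤ w := by
    rcases Nat.eq_zero_or_pos w with h'|h'
    · exact Or.inl h'
    · exact Or.inr (by exact_mod_cast h')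
  have hw0 : w = 0 → (w:ℚ) = 0 := by intro h'; subst h'; simp
  rcases (show r = 0 ∨ r = 1 ∨ r = 2 ∨ 3 ≤ r from by omega) with hr|hr|hr|hr
  · exfalso; subst hr; rw [cast_zero_eval] at h; linarith
  · exfalso; subst hr; rw [cast_one_eval] at h
    rcases hwcase with h'|h'
    · rw [hw0 h'] at h; linarith
    · have : (w:ℚ) ≤ 1 ∨ (2:ℚ) ≤ w := by
        rcases (show w ≤ 1 ∨ 2 ≤ w from by omega) with h''|h''
        · exact Or.inl (by exact_mod_cast h'')
        · exact Or.inr (by exact_mod_cast h'')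
      rcases this with h''|h''
      · linarith
      · linarith
  · exfalso; subst hr; rw [cast_two_eval] at h
    rcases hwcase with h'|h'
    · rw [hw0 h'] at h; linarith
    · linarith
  · obtain ⟨hd0, hd⟩ := big_r hr
    have hww : w = 0 := by
      rcases hwcase with h'|h'
      · exact h'
      · exfalso; linarith
    subst hww
    refine ⟨?_, rfl⟩
    simp only [Nat.cast_zero, add_zero] at h
    have hinv : 1/(r:ℚ) = 1/3 := by linarith
    have h0 : (0:ℚ) < r := by exact_mod_cast (show 0 < r by omega)
    have hr3 : (r:ℚ) = 3 := by field_simp at hinv; linarith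
    exact_mod_cast hr3

/-- If `Γ` acts harmonically on `G` with `R > 2`, then `R ≥ 7/3`, and
`R = 7/3` occurs in exactly three ways: a single branch point with `r = 3, w = 1`; two
branch points with vector `(3,2;0,0)`; or two branch points with vector `(3,1;0,1)`
(up to reordering). -/
theorem ram_gt_two {Γ : Type} [Group Γ] {G : Multigraph} (A : GraphAction Γ G)
    (hA : A.ActsHarmonically) (hR : 2 < A.ram ⊤) :
    (7/3 : ℚ) ≤ A.ram ⊤ ∧
    (A.ram ⊤ = 7/3 ↔
      (((∃! y : A.quotV ⊤, A.IsBranch ⊤ y) ∧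
        ∀ y : A.quotV ⊤, A.IsBranch ⊤ y → A.r ⊤ y = 3 ∧ A.w ⊤ y = 1) ∨
      (∃ y₁ y₂ : A.quotV ⊤, y₁ ≠ y₂ ∧ A.IsBranch ⊤ y₁ ∧ A.IsBranch ⊤ y₂ ∧
        (∀ y : A.quotV ⊤, A.IsBranch ⊤ y → y = y₁ ∨ y = y₂) ∧
        A.r ⊤ y₁ = 3 ∧ A.r ⊤ y₂ = 2 ∧ A.w ⊤ y₁ = 0 ∧ A.w ⊤ y₂ = 0) ∨
      (∃ y₁ y₂ : A.quotV ⊤, y₁ ≠ y₂ ∧ A.IsBranch ⊤ y₁ ∧ A.IsBranch ⊤ y₂ ∧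
        (∀ y : A.quotV ⊤, A.IsBranch ⊤ y → y = y₁ ∨ y = y₂) ∧
        A.r ⊤ y₁ = 3 ∧ A.r ⊤ y₂ = 1 ∧ A.w ⊤ y₁ = 0 ∧ A.w ⊤ y₂ = 1))) := by
  classical
  haveI : Fintype (A.quotV ⊤) := Fintype.ofFinite _
  set f : A.quotV (G := G) ⊤ → ℚ :=
    fun y => 2 * (1 - 1 / (A.r ⊤ y : ℚ)) + (A.w ⊤ y : ℚ) with hf
  have hbr : ∀ y, A.IsBranch ⊤ y ↔ 0 < f y := fun y => Iff.rfl
  have hram : A.ram ⊤ = ∑ y, f y := finsum_eq_sum_of_fintype _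
  set B : Finset (A.quotV (G := G) ⊤) := Finset.univ.filter (A.IsBranch ⊤) with hBdef
  have hmem : ∀ y, y ∈ B ↔ A.IsBranch ⊤ y := by
    intro y; simp [hBdef]
  clear_value f
  have hnn : ∀ y, 0 ≤ f y := by
    intro y; simp only [hf]; exact term_nonneg _ _
  have hone : ∀ y, 0 < f y → 1 ≤ f y := by
    intro y; simp only [hf]; exact term_ge_one
  have hft : ∀ y, 1 < f y → 4/3 ≤ f y := by
    intro y; simp only [hf]; exact term_ge_43
  have hst : ∀ y, 2 < f y → 7/3 ≤ f y := by
    intro y; simp only [hf]; exact term_ge_73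
  have heq73 : ∀ y, f y = 7/3 → A.r ⊤ y = 3 ∧ A.w ⊤ y = 1 := by
    intro y; simp only [hf]; exact term_eq_73
  have heq1 : ∀ y, f y = 1 → (A.r ⊤ y = 2 ∧ A.w ⊤ y = 0) ∨ (A.r ⊤ y = 1 ∧ A.w ⊤ y = 1) := by
    intro y; simp only [hf]; exact term_eq_one
  have heq43 : ∀ y, f y = 4/3 → A.r ⊤ y = 3 ∧ A.w ⊤ y = 0 := by
    intro y; simp only [hf]; exact term_eq_43
  have hzero : ∀ y, ¬ A.IsBranch ⊤ y → f y = 0 := by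
    intro y hy
    have h1 : f y ≤ 0 := not_lt.1 fun h => hy ((hbr y).2 h)
    have h2 : 0 ≤ f y := hnn y
    linarith
  have hsum : A.ram ⊤ = ∑ y ∈ B, f y := by
    rw [hram]
    symm
    apply Finset.sum_filter_of_ne
    intro y _ hy
    by_contra hc
    exact hy (hzero y hc)
  have hge1 : ∀ y ∈ B, 1 ≤ f y := by
    intro y hy
    exact hone y ((hbr y).1 ((hmem y).1 hy))
  have hpos : ∀ y ∈ B, 0 ≤ f y := fun y _ => hnn y
  -- converse direction of the equality characterization
  have key3 : (((∃! y : A.quotV ⊤, A.IsBranch ⊤ y) ∧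
        ∀ y : A.quotV ⊤, A.IsBranch ⊤ y → A.r ⊤ y = 3 ∧ A.w ⊤ y = 1) ∨
      (∃ y₁ y₂ : A.quotV ⊤, y₁ ≠ y₂ ∧ A.IsBranch ⊤ y₁ ∧ A.IsBranch ⊤ y₂ ∧
        (∀ y : A.quotV ⊤, A.IsBranch ⊤ y → y = y₁ ∨ y = y₂) ∧
        A.r ⊤ y₁ = 3 ∧ A.r ⊤ y₂ = 2 ∧ A.w ⊤ y₁ = 0 ∧ A.w ⊤ y₂ = 0) ∨
      (∃ y₁ y₂ : A.quotV ⊤, y₁ ≠ y₂ ∧ A.IsBranch ⊤ y₁ ∧ A.IsBranch ⊤ y₂ ∧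
        (∀ y : A.quotV ⊤, A.IsBranch ⊤ y → y = y₁ ∨ y = y₂) ∧
        A.r ⊤ y₁ = 3 ∧ A.r ⊤ y₂ = 1 ∧ A.w ⊤ y₁ = 0 ∧ A.w ⊤ y₂ = 1)) →
      ∑ y ∈ B, f y = 7/3 := by
    rintro (⟨⟨y₀, hy₀, huniq⟩, hval⟩ |
        ⟨y₁, y₂, hne, hb₁, hb₂, hall, hr₁, hr₂, hw₁, hw₂⟩ |
        ⟨y₁, y₂, hne, hb₁, hb₂, hall, hr₁, hr₂, hw₁, hw₂⟩)
    · have hB : B = {y₀} := by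
        ext z
        rw [hmem, Finset.mem_singleton]
        constructor
        · intro hz; exact huniq z hz
        · intro hz; subst hz; exact hy₀
      rw [hB, Finset.sum_singleton]
      obtain ⟨h1, h2⟩ := hval y₀ hy₀
      simp only [hf, h1, h2]
      norm_num
    · have hB : B = {y₁, y₂} := by
        ext z
        rw [hmem, Finset.mem_insert, Finset.mem_singleton]
        constructor
        · intro hz; exact hall z hz
        · rintro (hz|hz) <;> subst hz
          · exact hb₁
          · exact hb₂
      rw [hB, Finset.sum_pair hne]
      simp only [hf, hr₁, hr₂, hw₁, hw₂]
      norm_num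
    · have hB : B = {y₁, y₂} := by
        ext z
        rw [hmem, Finset.mem_insert, Finset.mem_singleton]
        constructor
        · intro hz; exact hall z hz
        · rintro (hz|hz) <;> subst hz
          · exact hb₁
          · exact hb₂
      rw [hB, Finset.sum_pair hne]
      simp only [hf, hr₁, hr₂, hw₁, hw₂]
      norm_num
  rw [hsum] at hR ⊢
  rcases (show B.card = 0 ∨ B.card = 1 ∨ B.card = 2 ∨ 3 ≤ B.card from by omega)
      with hc|hc|hc|hc
  · exfalso
    rw [Finset.card_eq_zero] at hc
    rw [hc, Finset.sum_empty] at hR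
    norm_num at hR
  · -- one branch point
    obtain ⟨y, hy⟩ := Finset.card_eq_one.mp hc
    have hybr : A.IsBranch ⊤ y := by
      rw [← hmem, hy]; exact Finset.mem_singleton_self y
    rw [hy, Finset.sum_singleton] at hR ⊢
    have h73 : 7/3 ≤ f y := hst y hR
    refine ⟨h73, ?_, ?_⟩
    · intro heq
      left
      refine ⟨⟨y, hybr, ?_⟩, ?_⟩
      · intro z hz
        have : z ∈ B := (hmem z).2 hz
        rw [hy, Finset.mem_singleton] at this
        exact this
      · intro z hz
        have hzy : z = y := by
          have : z ∈ B := (hmem z).2 hz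
          rw [hy, Finset.mem_singleton] at this
          exact this
        rw [hzy]
        exact heq73 y heq
    · intro hrhs
      have := key3 hrhs
      rw [hy, Finset.sum_singleton] at this
      exact this
  · -- two branch points
    obtain ⟨a, b, hab, hy⟩ := Finset.card_eq_two.mp hc
    have ha : A.IsBranch ⊤ a := by
      rw [← hmem, hy]; exact Finset.mem_insert_self a {b}
    have hb : A.IsBranch ⊤ b := by
      rw [← hmem, hy]
      exact Finset.mem_insert_of_mem (Finset.mem_singleton_self b)
    have hall : ∀ z, A.IsBranch ⊤ z → z = a ∨ z = b := by
      intro z hz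
      have : z ∈ B := (hmem z).2 hz
      rw [hy, Finset.mem_insert, Finset.mem_singleton] at this
      exact this
    have ha1 : 1 ≤ f a := hone a ((hbr a).1 ha)
    have hb1 : 1 ≤ f b := hone b ((hbr b).1 hb)
    rw [hy, Finset.sum_pair hab] at hR ⊢
    have hmain : 7/3 ≤ f a + f b := by
      by_cases h1 : 1 < f a
      · have h43 : 4/3 ≤ f a := hft a h1
        linarith
      · have h2 : 1 < f b := by
          have : f a ≤ 1 := not_lt.1 h1
          linarith
        have h43 : 4/3 ≤ f b := hft b h2
        linarith
    refine ⟨hmain, ?_, ?_⟩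
    · intro heq
      by_cases h1 : 1 < f a
      · have h43 : 4/3 ≤ f a := hft a h1
        have hfa : f a = 4/3 := by linarith
        have hfb : f b = 1 := by linarith
        obtain ⟨hra, hwa⟩ := heq43 a hfa
        rcases heq1 b hfb with ⟨hrb, hwb⟩ | ⟨hrb, hwb⟩
        · exact Or.inr (Or.inl ⟨a, b, hab, ha, hb, hall, hra, hrb, hwa, hwb⟩)
        · exact Or.inr (Or.inr ⟨a, b, hab, ha, hb, hall, hra, hrb, hwa, hwb⟩)
      · have hfa : f a = 1 := by
          have : f a ≤ 1 := not_lt.1 h1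
          linarith
        have h2 : 1 < f b := by linarith
        have h43 : 4/3 ≤ f b := hft b h2
        have hfb : f b = 4/3 := by linarith
        obtain ⟨hrb, hwb⟩ := heq43 b hfb
        have hall' : ∀ z, A.IsBranch ⊤ z → z = b ∨ z = a := by
          intro z hz
          rcases hall z hz with h|h
          · exact Or.inr h
          · exact Or.inl h
        rcases heq1 a hfa with ⟨hra, hwa⟩ | ⟨hra, hwa⟩
        · exact Or.inr (Or.inl ⟨b, a, hab.symm, hb, ha, hall', hrb, hra, hwb, hwa⟩)
        · exact Or.inr (Or.inr ⟨b, a, hab.symm, hb, ha, hall', hrb, hra, hwb, hwa⟩)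
    · intro hrhs
      have := key3 hrhs
      rw [hy, Finset.sum_pair hab] at this
      exact this
  · -- at least three branch points
    obtain ⟨T, hTB, hT3⟩ := Finset.exists_subset_card_eq hc
    obtain ⟨x, y, z, hxy, hxz, hyz, hTxyz⟩ := Finset.card_eq_three.mp hT3
    have hxB : x ∈ B := hTB (by rw [hTxyz]; simp)
    have hyB : y ∈ B := hTB (by rw [hTxyz]; simp)
    have hzB : z ∈ B := hTB (by rw [hTxyz]; simp)
    have hsumT : f x + f y + f z ≤ ∑ u ∈ B, f u := by
      have h1 : ∑ u ∈ T, f u ≤ ∑ u ∈ B, f u :=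
        Finset.sum_le_sum_of_subset_of_nonneg hTB fun i hi _ => hpos i hi
      have h2 : ∑ u ∈ T, f u = f x + f y + f z := by
        rw [hTxyz]
        rw [Finset.sum_insert (by simp [hxy, hxz]), Finset.sum_pair hyz]
        ring
      linarith
    have h3 : (3:ℚ) ≤ ∑ u ∈ B, f u := by
      have := hge1 x hxB
      have := hge1 y hyB
      have := hge1 z hzB
      linarith
    refine ⟨by linarith, ?_, ?_⟩
    · intro heq; exfalso; linarith
    · intro hrhs
      exfalso
      have := key3 hrhs
      linarith
end

section
/- Suppose a nontrivial group Γ acts harmonically on a tree T (a graph of genus 0). Then the ramification number R of the quotient map T → T/Γ satisfies 0 < R < 2, the order of Γ equals 2/(2 − R), and there is exactly one branch point y in T/Γ, with either r_y = w_y = 1 (in which case |Γ| = 2) or r_y = |Γ| ≥ 2 and w_y = 0. -/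
open scoped Classical

namespace TH

open GraphAction

variable {Γ : Type} [Group Γ] {T : Multigraph}

lemma ends_other {e : T.E} {x : T.V} (h : x ∈ T.ends e) :
    ∃ y, x ≠ y ∧ T.ends e = s(x, y) := by
  obtain ⟨y, hy⟩ := Sym2.mem_iff_exists.mp h
  refine ⟨y, ?_, hy⟩
  intro hxy
  exact T.loopless e (by rw [hy]; exact Sym2.mk_isDiag_iff.mpr hxy)

lemma eq_one_of_fix (A : GraphAction Γ T) {γ : Γ} (hv : ∀ x, A.actV γ x = x)
    (he : ∀ e, A.actE γ e = e) : γ = 1 :=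
  A.faithful γ hv he

lemma finite_gamma (A : GraphAction Γ T) : Finite Γ := by
  have hinj : Function.Injective (fun γ : Γ => (A.actV γ, A.actE γ)) := by
    intro γ₁ γ₂ h
    simp only [Prod.mk.injEq] at h
    have h1 : γ₂⁻¹ * γ₁ = 1 := by
      apply A.faithful
      · intro x; rw [map_mul, Equiv.Perm.mul_apply, h.1, map_inv, Equiv.Perm.coe_inv, Equiv.symm_apply_apply]
      · intro e; rw [map_mul, Equiv.Perm.mul_apply, h.2, map_inv, Equiv.Perm.coe_inv, Equiv.symm_apply_apply]
    exact (inv_mul_eq_one.mp h1).symm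
  exact Finite.of_injective _ hinj

lemma fix_endpoint (A : GraphAction Γ T) {γ : Γ} {e : T.E} {x y : T.V}
    (hends : T.ends e = s(x, y)) (he : A.actE γ e = e) (hx : A.actV γ x = x) :
    A.actV γ y = y := by
  have h := A.ends_map γ e
  rw [he, hends, Sym2.map_pair_eq, hx] at h
  rcases Sym2.eq_iff.mp h.symm with ⟨_, h2⟩ | ⟨h1, h2⟩
  · exact h2
  · subst h1; exact h2

/-- The key rigidity lemma: an automorphism in a harmonically acting group fixing a
vertex and an incident edge is trivial. -/
lemma rigid (A : GraphAction Γ T) (hA : A.ActsHarmonically) {γ : Γ} {x : T.V} {e : T.E}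
    (hxe : x ∈ T.ends e) (hx : A.actV γ x = x) (he : A.actE γ e = e) : γ = 1 := by
  set Δ := Subgroup.zpowers γ with hΔ
  have hΔv : ∀ δ ∈ Δ, ∀ v, A.actV γ v = v → A.actV δ v = v := by
    intro δ hδ v hv
    obtain ⟨k, rfl⟩ := Subgroup.mem_zpowers_iff.mp hδ
    rw [map_zpow]
    exact (Function.IsFixedPt.perm_zpow hv k)
  have hΔe : ∀ δ ∈ Δ, ∀ f, A.actE γ f = f → A.actE δ f = f := by
    intro δ hδ f hf
    obtain ⟨k, rfl⟩ := Subgroup.mem_zpowers_iff.mp hδ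
    rw [map_zpow]
    exact (Function.IsFixedPt.perm_zpow hf k)
  set C : T.V → Prop := fun v => A.actV γ v = v ∧ ∃ f, v ∈ T.ends f ∧ A.actE γ f = f
    with hC
  have main : ∀ u, C u → ∀ g, u ∈ T.ends g → A.actE γ g = g := by
    rintro u ⟨hu, f, huf, hf⟩ g hug
    have hfixu : ∀ δ ∈ Δ, A.actV δ u = u := fun δ hδ => hΔv δ hδ u hu
    have hfixf : ∀ δ ∈ Δ, A.actE δ f = f := fun δ hδ => hΔe δ hδ f hf
    have hnv : ∀ h, u ∈ T.ends h → ¬ A.Vertical Δ h := by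
      rintro h huh ⟨p, q, hpq, δ, hδ, hδpq⟩
      obtain ⟨z, hz, hends⟩ := ends_other huh
      rw [hends] at hpq
      have hzu : A.vrel Δ u z → False := by
        rintro ⟨τ, hτ, hτu⟩
        exact hz (((hfixu τ hτ) ▸ hτu : u = z))
      rcases Sym2.eq_iff.mp hpq with ⟨h1, h2⟩ | ⟨h1, h2⟩
      · exact hzu ⟨δ, hδ, by rw [h1, hδpq, h2]⟩
      · refine hzu ⟨δ⁻¹, Subgroup.inv_mem _ hδ, ?_⟩
        rw [map_inv, h1, ← hδpq, Equiv.Perm.coe_inv, Equiv.symm_apply_apply, h2]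
    have hvrelself : A.vrel Δ u u := ⟨1, Subgroup.one_mem _, by simp⟩
    have harm := (hA Δ).1 u g f (hnv g hug) (hnv f huf) ⟨u, hug, hvrelself⟩
      ⟨u, huf, hvrelself⟩
    have hcardf : Nat.card {h : T.E // u ∈ T.ends h ∧ A.erel Δ h f} = 1 := by
      have : Unique {h : T.E // u ∈ T.ends h ∧ A.erel Δ h f} := by
        refine ⟨⟨⟨f, huf, 1, Subgroup.one_mem _, by simp⟩⟩, ?_⟩
        rintro ⟨h, hh, δ, hδ, hδh⟩
        have hf' := hΔe δ⁻¹ (Subgroup.inv_mem _ hδ) f hf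
        rw [map_inv] at hf'
        have h3 : h = (A.actE δ)⁻¹ f := by
          rw [← hδh]; exact (Equiv.symm_apply_apply _ _).symm
        have : h = f := by rw [h3]; exact hf'
        simp [this]
      exact Nat.card_unique
    rw [hcardf] at harm
    obtain ⟨hsub, -⟩ := Nat.card_eq_one_iff_unique.mp harm
    have m1 : u ∈ T.ends (A.actE γ g) := by
      rw [A.ends_map γ g]
      exact Sym2.mem_map.mpr ⟨u, hug, hu⟩
    have m2 : A.erel Δ (A.actE γ g) g := by
      refine ⟨γ⁻¹, Subgroup.inv_mem _ (Subgroup.mem_zpowers γ), ?_⟩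
      rw [map_inv, Equiv.Perm.coe_inv, Equiv.symm_apply_apply]
    have m3 : A.erel Δ g g := ⟨1, Subgroup.one_mem _, by simp⟩
    have := hsub.allEq ⟨A.actE γ g, m1, m2⟩ ⟨g, hug, m3⟩
    exact congrArg Subtype.val this
  have step : ∀ u u', C u →
      (SimpleGraph.fromRel fun x y : T.V => ∃ e : T.E, T.ends e = s(x, y)).Adj u u' →
      C u' := by
    intro u u' hCu hadj
    rw [SimpleGraph.fromRel_adj] at hadj
    obtain ⟨hne, hor⟩ := hadj
    have hedge : ∃ g : T.E, T.ends g = s(u, u') := by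
      rcases hor with ⟨g, hg⟩ | ⟨g, hg⟩
      · exact ⟨g, hg⟩
      · exact ⟨g, by rw [hg, Sym2.eq_swap]⟩
    obtain ⟨g, hg⟩ := hedge
    have hug : u ∈ T.ends g := by rw [hg]; exact Sym2.mem_mk_left u u'
    have hgfix := main u hCu g hug
    refine ⟨fix_endpoint A hg hgfix hCu.1, g, ?_, hgfix⟩
    rw [hg]; exact Sym2.mem_mk_right u u'
  have trans : ∀ (a b : T.V)
      (_ : (SimpleGraph.fromRel fun x y : T.V => ∃ e : T.E, T.ends e = s(x, y)).Walk a b),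
      C a → C b := by
    intro a b p
    induction p with
    | nil => exact id
    | cons h _ ih => exact fun hCa => ih (step _ _ hCa h)
  have hCx : C x := ⟨hx, e, hxe, he⟩
  have hall : ∀ v, C v := fun v =>
    trans x v (T.connected.preconnected x v).some hCx
  apply eq_one_of_fix A (fun v => (hall v).1)
  intro g
  have : ∃ p q, T.ends g = s(p, q) := Sym2.ind (fun p q => ⟨p, q, rfl⟩) (T.ends g)
  obtain ⟨p, q, hpq⟩ := this
  exact main p (hall p) g (by rw [hpq]; exact Sym2.mem_mk_left p q)

/-! ### Generic counting lemmas -/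

lemma card_fiber_sum {α β : Type} [Fintype α] [Fintype β] (f : α → β) :
    Fintype.card α = ∑ b : β, Nat.card {a // f a = b} := by
  have h := Fintype.card_congr (Equiv.sigmaFiberEquiv f)
  rw [Fintype.card_sigma] at h
  rw [← h]
  exact Finset.sum_congr rfl fun b _ => Nat.card_eq_fintype_card.symm

lemma card_orbit_free {β : Type} [Finite Γ] (act : Γ →* Equiv.Perm β) (b : β)
    (free : ∀ γ : Γ, act γ b = b → γ = 1) :
    Nat.card {b' : β // ∃ γ : Γ, act γ b = b'} = Nat.card Γ := by
  symm
  apply Nat.card_eq_of_bijective (fun γ => ⟨act γ b, γ, rfl⟩)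
  constructor
  · intro γ₁ γ₂ h
    have h' : act γ₁ b = act γ₂ b := congrArg Subtype.val h
    have h1 : γ₂⁻¹ * γ₁ = 1 := by
      apply free
      rw [map_mul, Equiv.Perm.mul_apply, h', map_inv, Equiv.Perm.coe_inv, Equiv.symm_apply_apply]
    exact (inv_mul_eq_one.mp h1).symm
  · rintro ⟨b', γ, rfl⟩
    exact ⟨γ, rfl⟩

lemma card_orbit_stab {β : Type} [Finite Γ] [Fintype β] (act : Γ →* Equiv.Perm β) (b : β) :
    Nat.card Γ =
      Nat.card {γ : Γ // act γ b = b} * Nat.card {b' : β // ∃ γ : Γ, act γ b = b'} := by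
  letI := Fintype.ofFinite Γ
  rw [Nat.card_eq_fintype_card,
    card_fiber_sum (fun γ : Γ => (⟨act γ b, ⟨γ, rfl⟩⟩ : {b' : β // ∃ γ : Γ, act γ b = b'}))]
  have key : ∀ y : {b' : β // ∃ γ : Γ, act γ b = b'},
      Nat.card {γ : Γ // (⟨act γ b, ⟨γ, rfl⟩⟩ : {b' : β // ∃ γ : Γ, act γ b = b'}) = y} =
      Nat.card {γ : Γ // act γ b = b} := by
    rintro ⟨b', γ₀, rfl⟩
    have e1 : {γ : Γ // (⟨act γ b, ⟨γ, rfl⟩⟩ : {b' : β // ∃ γ : Γ, act γ b = b'}) =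
        ⟨act γ₀ b, γ₀, rfl⟩} ≃ {γ : Γ // act γ b = act γ₀ b} :=
      Equiv.subtypeEquivRight fun γ => Subtype.ext_iff
    rw [Nat.card_congr e1]
    apply Nat.card_congr
    refine ⟨fun p => ⟨γ₀⁻¹ * p.val, ?_⟩, fun p => ⟨γ₀ * p.val, ?_⟩, ?_, ?_⟩
    · rw [map_mul, Equiv.Perm.mul_apply, p.prop, map_inv, Equiv.Perm.coe_inv, Equiv.symm_apply_apply]
    · rw [map_mul, Equiv.Perm.mul_apply, p.prop]
    · intro p; ext; simp
    · intro p; ext; simp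
  rw [Finset.sum_congr rfl fun y _ => key y, Finset.sum_const, Finset.card_univ,
    smul_eq_mul, mul_comm]
  simp [Nat.card_eq_fintype_card]

/-! ### Specialized counting for the action -/

lemma vrel_top_iff (A : GraphAction Γ T) (x y : T.V) :
    A.vrel ⊤ x y ↔ ∃ γ : Γ, A.actV γ x = y := by
  constructor
  · rintro ⟨δ, -, h⟩; exact ⟨δ, h⟩
  · rintro ⟨γ, h⟩; exact ⟨γ, Subgroup.mem_top γ, h⟩

lemma erel_top_iff (A : GraphAction Γ T) (e f : T.E) :
    A.erel ⊤ e f ↔ ∃ γ : Γ, A.actE γ e = f := by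
  constructor
  · rintro ⟨δ, -, h⟩; exact ⟨δ, h⟩
  · rintro ⟨γ, h⟩; exact ⟨γ, Subgroup.mem_top γ, h⟩

lemma vertical_act (A : GraphAction Γ T) (γ : Γ) {e : T.E} (h : A.Vertical ⊤ e) :
    A.Vertical ⊤ (A.actE γ e) := by
  obtain ⟨p, q, hpq, δ, -, hδ⟩ := h
  refine ⟨A.actV γ p, A.actV γ q, ?_, γ * δ * γ⁻¹, Subgroup.mem_top _, ?_⟩
  · rw [A.ends_map, hpq, Sym2.map_pair_eq]
  · rw [map_mul, map_mul, map_inv, Equiv.Perm.mul_apply, Equiv.Perm.mul_apply,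
      Equiv.Perm.coe_inv, Equiv.symm_apply_apply, hδ]

lemma vertical_act_iff (A : GraphAction Γ T) (γ : Γ) (e : T.E) :
    A.Vertical ⊤ (A.actE γ e) ↔ A.Vertical ⊤ e := by
  constructor
  · intro h
    have h2 := vertical_act A γ⁻¹ h
    rwa [map_inv, Equiv.Perm.coe_inv, Equiv.symm_apply_apply] at h2
  · exact vertical_act A γ

lemma nonvert_stab (A : GraphAction Γ T) (hA : A.ActsHarmonically) {e : T.E}
    (h : ¬ A.Vertical ⊤ e) : ∀ γ : Γ, A.actE γ e = e → γ = 1 := by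
  intro γ hγ
  obtain ⟨p, q, hpq⟩ : ∃ p q, T.ends e = s(p, q) :=
    Sym2.ind (fun p q => ⟨p, q, rfl⟩) (T.ends e)
  have hmem : p ∈ T.ends e := by rw [hpq]; exact Sym2.mem_mk_left p q
  have hmape := A.ends_map γ e
  rw [hγ, hpq, Sym2.map_pair_eq] at hmape
  rcases Sym2.eq_iff.mp hmape.symm with ⟨h1, _⟩ | ⟨h1, h2⟩
  · exact rigid A hA hmem h1 hγ
  · exact absurd ⟨p, q, hpq, γ, Subgroup.mem_top γ, h1⟩ h

lemma stabOrder_eq (A : GraphAction Γ T) (x : T.V) :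
    A.stabOrder ⊤ x = Nat.card {γ : Γ // A.actV γ x = x} :=
  Nat.card_congr (Equiv.subtypeEquivRight fun γ => by simp)

lemma orbit_stab_vertex (A : GraphAction Γ T) [Finite Γ] (x : T.V) :
    Nat.card Γ = A.stabOrder ⊤ x * Nat.card {y : T.V // A.vrel ⊤ x y} := by
  rw [stabOrder_eq, card_orbit_stab A.actV x]
  congr 1
  exact Nat.card_congr (Equiv.subtypeEquivRight fun y => (vrel_top_iff A x y).symm)

lemma fiber_iff_vrel (A : GraphAction Γ T) (y : A.quotV ⊤) (x : T.V) :
    Quotient.mk (A.vSetoid ⊤) x = y ↔ A.vrel ⊤ y.out x := by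
  constructor
  · intro h
    have h2 : Quotient.mk (A.vSetoid ⊤) x = Quotient.mk (A.vSetoid ⊤) y.out := by
      rw [h, Quotient.out_eq]
    exact (A.vSetoid ⊤).iseqv.symm (Quotient.exact h2)
  · intro h
    rw [← Quotient.out_eq y]
    exact Quotient.sound ((A.vSetoid ⊤).iseqv.symm h)

lemma sumV (A : GraphAction Γ T) :
    Fintype.card T.V = ∑ y : A.quotV ⊤, Nat.card {x : T.V // A.vrel ⊤ y.out x} := by
  rw [card_fiber_sum (Quotient.mk (A.vSetoid ⊤))]
  exact Finset.sum_congr rfl fun y _ =>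
    Nat.card_congr (Equiv.subtypeEquivRight fun x => fiber_iff_vrel A y x)

lemma vertMult_vrel (A : GraphAction Γ T) {x x' : T.V} (h : A.vrel ⊤ x x') :
    A.vertMult ⊤ x = A.vertMult ⊤ x' := by
  obtain ⟨δ, -, hδ⟩ := h
  apply Nat.card_congr
  refine ⟨fun p => ⟨A.actE δ p.val, ?_, ?_⟩, fun p => ⟨A.actE δ⁻¹ p.val, ?_, ?_⟩, ?_, ?_⟩
  · rw [A.ends_map]
    exact Sym2.mem_map.mpr ⟨x, p.prop.1, hδ⟩
  · exact vertical_act A δ p.prop.2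
  · rw [A.ends_map]
    refine Sym2.mem_map.mpr ⟨x', p.prop.1, ?_⟩
    rw [map_inv, ← hδ, Equiv.Perm.coe_inv, Equiv.symm_apply_apply]
  · exact (vertical_act_iff A δ⁻¹ _).mpr p.prop.2
  · intro p; apply Subtype.ext
    show A.actE δ⁻¹ (A.actE δ p.val) = p.val
    rw [map_inv, Equiv.Perm.coe_inv, Equiv.symm_apply_apply]
  · intro p; apply Subtype.ext
    show A.actE δ (A.actE δ⁻¹ p.val) = p.val
    rw [map_inv, Equiv.Perm.coe_inv, Equiv.apply_symm_apply]

lemma sum_vertMult (A : GraphAction Γ T) :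
    ∑ x : T.V, A.vertMult ⊤ x =
      ∑ y : A.quotV ⊤, Nat.card {x : T.V // A.vrel ⊤ y.out x} * A.vertMult ⊤ y.out := by
  rw [← Fintype.sum_fiberwise (Quotient.mk (A.vSetoid ⊤)) (fun x => A.vertMult ⊤ x)]
  apply Finset.sum_congr rfl
  intro y _
  have hconst : ∀ a : {x : T.V // Quotient.mk (A.vSetoid ⊤) x = y},
      A.vertMult ⊤ a.val = A.vertMult ⊤ y.out :=
    fun a => (vertMult_vrel A ((fiber_iff_vrel A y a.val).mp a.prop)).symm
  rw [Finset.sum_congr rfl fun a _ => hconst a, Finset.sum_const, Finset.card_univ,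
    smul_eq_mul]
  congr 1
  rw [← Nat.card_eq_fintype_card]
  exact Nat.card_congr (Equiv.subtypeEquivRight fun x => fiber_iff_vrel A y x)

lemma fixV_inv (A : GraphAction Γ T) {γ : Γ} {x : T.V} (h : A.actV γ x = x) :
    A.actV γ⁻¹ x = x := by
  rw [map_inv]
  conv_lhs => rw [← h]
  exact Equiv.symm_apply_apply _ _

lemma fiber_iff_erel (A : GraphAction Γ T) (y : A.quotE ⊤) (e : {e : T.E // ¬ A.Vertical ⊤ e}) :
    Quotient.mk ((A.eSetoid ⊤).comap (Subtype.val : {e : T.E // ¬ A.Vertical ⊤ e} → T.E)) e = y ↔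
      A.erel ⊤ y.out.val e.val := by
  constructor
  · intro h
    have h2 : Quotient.mk ((A.eSetoid ⊤).comap Subtype.val) e =
        Quotient.mk ((A.eSetoid ⊤).comap Subtype.val) y.out := by
      rw [h, Quotient.out_eq]
    have h3 : A.erel ⊤ e.val y.out.val := Quotient.exact h2
    exact (A.eSetoid ⊤).iseqv.symm h3
  · intro h
    rw [← Quotient.out_eq y]
    have h3 : A.erel ⊤ e.val y.out.val := (A.eSetoid ⊤).iseqv.symm h
    exact Quotient.sound h3

lemma sumNV (A : GraphAction Γ T) (hA : A.ActsHarmonically) [Finite Γ] :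
    Nat.card {e : T.E // ¬ A.Vertical ⊤ e} = Nat.card (A.quotE ⊤) * Nat.card Γ := by
  letI := Fintype.ofFinite Γ
  rw [Nat.card_eq_fintype_card,
    card_fiber_sum (Quotient.mk ((A.eSetoid ⊤).comap
      (Subtype.val : {e : T.E // ¬ A.Vertical ⊤ e} → T.E)))]
  have key : ∀ y : A.quotE ⊤,
      Nat.card {e : {e : T.E // ¬ A.Vertical ⊤ e} //
        Quotient.mk ((A.eSetoid ⊤).comap Subtype.val) e = y} = Nat.card Γ := by
    intro y
    have e1 : {e : {e : T.E // ¬ A.Vertical ⊤ e} //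
        Quotient.mk ((A.eSetoid ⊤).comap Subtype.val) e = y} ≃
        {e : T.E // ∃ γ : Γ, A.actE γ y.out.val = e} := by
      refine ⟨fun p => ⟨p.val.val, (erel_top_iff A _ _).mp ((fiber_iff_erel A y p.val).mp p.prop)⟩,
        fun q => ⟨⟨q.val, ?_⟩, ?_⟩, fun p => ?_, fun q => ?_⟩
      · obtain ⟨γ, hγ⟩ := q.prop
        rw [← hγ, vertical_act_iff]
        exact y.out.prop
      · exact (fiber_iff_erel A y _).mpr ((erel_top_iff A _ _).mpr q.prop)
      · apply Subtype.ext; apply Subtype.ext; rfl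
      · apply Subtype.ext; rfl
    rw [Nat.card_congr e1, card_orbit_free A.actE y.out.val (nonvert_stab A hA y.out.prop)]
  rw [Finset.sum_congr rfl fun y _ => key y, Finset.sum_const, Finset.card_univ,
    smul_eq_mul]
  simp [Nat.card_eq_fintype_card]

lemma e_split (A : GraphAction Γ T) : Fintype.card T.E =
    Nat.card {e : T.E // A.Vertical ⊤ e} + Nat.card {e : T.E // ¬ A.Vertical ⊤ e} := by
  rw [← Nat.card_eq_fintype_card, ← Nat.card_sum]
  exact Nat.card_congr (Equiv.sumCompl fun e => A.Vertical ⊤ e).symm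

lemma card_mem_ends (e : T.E) : Nat.card {x : T.V // x ∈ T.ends e} = 2 := by
  obtain ⟨p, q, hpq⟩ : ∃ p q, T.ends e = s(p, q) :=
    Sym2.ind (fun p q => ⟨p, q, rfl⟩) (T.ends e)
  have hne : p ≠ q := fun h => T.loopless e (by rw [hpq]; exact Sym2.mk_isDiag_iff.mpr h)
  have e1 : {x : T.V // x ∈ T.ends e} ≃ ({p, q} : Set T.V) :=
    Equiv.subtypeEquivRight fun x => by
      rw [hpq, Sym2.mem_iff]
      simp [Set.mem_insert_iff]
  rw [Nat.card_congr e1, Nat.card_coe_set_eq, Set.ncard_pair hne]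

lemma nat_card_sigma {ι : Type} [Fintype ι] (f : ι → Type) [∀ i, Fintype (f i)] :
    Nat.card (Σ i, f i) = ∑ i, Nat.card (f i) := by
  rw [Nat.card_eq_fintype_card, Fintype.card_sigma]
  exact Finset.sum_congr rfl fun i _ => Nat.card_eq_fintype_card.symm

lemma double_count (A : GraphAction Γ T) :
    ∑ x : T.V, A.vertMult ⊤ x = 2 * Nat.card {e : T.E // A.Vertical ⊤ e} := by
  have e1 : {p : T.V × T.E // p.1 ∈ T.ends p.2 ∧ A.Vertical ⊤ p.2} ≃
      Σ x : T.V, {e : T.E // x ∈ T.ends e ∧ A.Vertical ⊤ e} :=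
    ⟨fun p => ⟨p.val.1, ⟨p.val.2, p.prop⟩⟩, fun s => ⟨(s.1, s.2.val), s.2.prop⟩,
      fun p => rfl, fun s => rfl⟩
  have e2 : {p : T.V × T.E // p.1 ∈ T.ends p.2 ∧ A.Vertical ⊤ p.2} ≃
      Σ e : T.E, {x : T.V // x ∈ T.ends e ∧ A.Vertical ⊤ e} :=
    ⟨fun p => ⟨p.val.2, ⟨p.val.1, p.prop⟩⟩, fun s => ⟨(s.2.val, s.1), s.2.prop⟩,
      fun p => rfl, fun s => rfl⟩
  have h1 : ∑ x : T.V, A.vertMult ⊤ x =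
      Nat.card {p : T.V × T.E // p.1 ∈ T.ends p.2 ∧ A.Vertical ⊤ p.2} := by
    rw [Nat.card_congr e1, nat_card_sigma]
    rfl
  have h3 : ∀ e : T.E, Nat.card {x : T.V // x ∈ T.ends e ∧ A.Vertical ⊤ e} =
      if A.Vertical ⊤ e then 2 else 0 := by
    intro e
    by_cases hv : A.Vertical ⊤ e
    · rw [if_pos hv, ← card_mem_ends (T := T) e]
      exact Nat.card_congr (Equiv.subtypeEquivRight fun x => and_iff_left hv)
    · rw [if_neg hv]
      have : IsEmpty {x : T.V // x ∈ T.ends e ∧ A.Vertical ⊤ e} := ⟨fun x => hv x.prop.2⟩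
      exact Nat.card_of_isEmpty
  rw [h1, Nat.card_congr e2, nat_card_sigma, Finset.sum_congr rfl fun e _ => h3 e]
  rw [← Finset.sum_filter, Finset.sum_const, smul_eq_mul, Nat.card_eq_fintype_card,
    Fintype.card_subtype, mul_comm]

lemma stab_dvd_vertMult (A : GraphAction Γ T) (hA : A.ActsHarmonically) [Finite Γ] (x : T.V) :
    A.stabOrder ⊤ x ∣ A.vertMult ⊤ x := by
  classical
  letI := Fintype.ofFinite Γ
  set X := {e : T.E // x ∈ T.ends e ∧ A.Vertical ⊤ e} with hX
  let sx : Setoid X :=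
    { r := fun a b => ∃ γ : Γ, A.actV γ x = x ∧ A.actE γ a.val = b.val
      iseqv := by
        refine ⟨?_, ?_, ?_⟩
        · intro a; exact ⟨1, by simp, by simp⟩
        · rintro a b ⟨γ, h1, h2⟩
          refine ⟨γ⁻¹, fixV_inv A h1, ?_⟩
          rw [← h2, map_inv, Equiv.Perm.coe_inv, Equiv.symm_apply_apply]
        · rintro a b c ⟨γ, h1, h2⟩ ⟨γ', h1', h2'⟩
          refine ⟨γ' * γ, ?_, ?_⟩
          · rw [map_mul, Equiv.Perm.mul_apply, h1, h1']
          · rw [map_mul, Equiv.Perm.mul_apply, h2, h2'] }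
  have main : ∀ ω : Quotient sx,
      Nat.card {a : X // Quotient.mk sx a = ω} = Nat.card {γ : Γ // A.actV γ x = x} := by
    intro ω
    have hmem : ∀ γ : {γ : Γ // A.actV γ x = x}, x ∈ T.ends (A.actE γ.val ω.out.val) := by
      intro γ
      rw [A.ends_map]
      exact Sym2.mem_map.mpr ⟨x, ω.out.prop.1, γ.prop⟩
    have hvert : ∀ γ : {γ : Γ // A.actV γ x = x}, A.Vertical ⊤ (A.actE γ.val ω.out.val) :=
      fun γ => vertical_act A γ.val ω.out.prop.2
    have hmk : ∀ γ : {γ : Γ // A.actV γ x = x},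
        Quotient.mk sx ⟨A.actE γ.val ω.out.val, hmem γ, hvert γ⟩ = ω := by
      intro γ
      conv_rhs => rw [← Quotient.out_eq ω]
      apply Quotient.sound
      refine ⟨γ.val⁻¹, fixV_inv A γ.prop, ?_⟩
      show A.actE γ.val⁻¹ (A.actE γ.val ω.out.val) = ω.out.val
      rw [map_inv, Equiv.Perm.coe_inv, Equiv.symm_apply_apply]
    symm
    apply Nat.card_eq_of_bijective
      (fun γ : {γ : Γ // A.actV γ x = x} =>
        (⟨⟨A.actE γ.val ω.out.val, hmem γ, hvert γ⟩, hmk γ⟩ : {a : X // Quotient.mk sx a = ω}))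
    constructor
    · intro γ₁ γ₂ h
      have h' : A.actE γ₁.val ω.out.val = A.actE γ₂.val ω.out.val :=
        congrArg (fun a => a.val.val) h
      have hVfix : A.actV (γ₂.val⁻¹ * γ₁.val) x = x := by
        rw [map_mul, Equiv.Perm.mul_apply, γ₁.prop]
        exact fixV_inv A γ₂.prop
      have hEfix : A.actE (γ₂.val⁻¹ * γ₁.val) ω.out.val = ω.out.val := by
        rw [map_mul, Equiv.Perm.mul_apply, h', map_inv, Equiv.Perm.coe_inv, Equiv.symm_apply_apply]
      have h1 : γ₂.val⁻¹ * γ₁.val = 1 := rigid A hA ω.out.prop.1 hVfix hEfix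
      exact Subtype.ext (inv_mul_eq_one.mp h1).symm
    · rintro ⟨a, ha⟩
      have h2 : Quotient.mk sx a = Quotient.mk sx ω.out := by rw [ha, Quotient.out_eq]
      have h3 : ∃ τ : Γ, A.actV τ x = x ∧ A.actE τ a.val = ω.out.val := Quotient.exact h2
      obtain ⟨τ, hτx, hτ⟩ := h3
      refine ⟨⟨τ⁻¹, fixV_inv A hτx⟩, ?_⟩
      apply Subtype.ext; apply Subtype.ext
      show A.actE τ⁻¹ ω.out.val = a.val
      rw [← hτ, map_inv, Equiv.Perm.coe_inv, Equiv.symm_apply_apply]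
  have hcard : A.vertMult ⊤ x = Nat.card (Quotient sx) * Nat.card {γ : Γ // A.actV γ x = x} := by
    have h0 : A.vertMult ⊤ x = Fintype.card X := by
      rw [← Nat.card_eq_fintype_card]; rfl
    rw [h0, card_fiber_sum (Quotient.mk sx), Finset.sum_congr rfl fun ω _ => main ω,
      Finset.sum_const, Finset.card_univ, smul_eq_mul]
    simp [Nat.card_eq_fintype_card]
  rw [stabOrder_eq, hcard]
  exact ⟨Nat.card (Quotient sx), mul_comm _ _⟩


/-! ### Connected graphs have at least `card V - 1` edges -/

lemma conn_card_bound {α : Type} [Fintype α] {G : SimpleGraph α} (h : G.Connected) :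
    Fintype.card α ≤ Nat.card G.edgeSet + 1 := by
  classical
  obtain ⟨root⟩ := h.nonempty
  have key : ∀ v : α, v ≠ root → ∃ w, G.Adj v w ∧ G.dist w root + 1 = G.dist v root := by
    intro v hv
    obtain ⟨p, hp⟩ := (h.preconnected v root).exists_walk_length_eq_dist
    have hd : 0 < G.dist v root := h.pos_dist_of_ne hv
    cases p with
    | nil => simp at hd
    | @cons _ w _ hadj q =>
      refine ⟨w, hadj, ?_⟩
      have h1 : G.dist w root ≤ q.length := SimpleGraph.dist_le q
      have h2 : G.dist v root ≤ G.dist v w + G.dist w root := h.dist_triangle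
      have h3 : G.dist v w = 1 := SimpleGraph.dist_eq_one_iff_adj.mpr hadj
      rw [SimpleGraph.Walk.length_cons] at hp
      omega
  choose w hw hdist using key
  have hinj : Function.Injective (fun v : {v : α // v ≠ root} =>
      (⟨s(v.val, w v.val v.prop), (hw v.val v.prop : G.Adj _ _)⟩ : G.edgeSet)) := by
    intro v₁ v₂ hvv
    have h1 : s(v₁.val, w v₁.val v₁.prop) = s(v₂.val, w v₂.val v₂.prop) :=
      congrArg Subtype.val hvv
    rcases Sym2.eq_iff.mp h1 with ⟨h2, h3⟩ | ⟨h2, h3⟩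
    · exact Subtype.ext h2
    · exfalso
      have d1 := hdist v₁.val v₁.prop
      have d2 := hdist v₂.val v₂.prop
      have e1 : G.dist v₁.val root = G.dist (w v₂.val v₂.prop) root := by rw [h2]
      have e2 : G.dist (w v₁.val v₁.prop) root = G.dist v₂.val root := by rw [h3]
      omega
  have hcard1 : Fintype.card {v : α // v ≠ root} ≤ Fintype.card G.edgeSet :=
    Fintype.card_le_of_injective _ hinj
  have hcard2 : Fintype.card {v : α // v ≠ root} = Fintype.card α - 1 := by
    rw [Fintype.card_subtype_compl, Fintype.card_subtype_eq]
  have hpos : 0 < Fintype.card α := Fintype.card_pos_iff.mpr ⟨root⟩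
  rw [Nat.card_eq_fintype_card]
  omega

/-! ### The quotient graph and its connectivity -/

/-- The simple graph on the `Γ`-orbit classes of vertices induced by non-vertical edges. -/
noncomputable def quotGraph (A : GraphAction Γ T) : SimpleGraph (A.quotV ⊤) :=
  SimpleGraph.fromRel (fun a b => ∃ (e : T.E) (p q : T.V), ¬ A.Vertical ⊤ e ∧
    T.ends e = s(p, q) ∧ Quotient.mk (A.vSetoid ⊤) p = a ∧ Quotient.mk (A.vSetoid ⊤) q = b)

lemma quotGraph_connected (A : GraphAction Γ T) : (quotGraph A).Connected := by
  have hne : Nonempty (A.quotV ⊤) := by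
    obtain ⟨v⟩ := T.connected.nonempty
    exact ⟨Quotient.mk (A.vSetoid ⊤) v⟩
  rw [SimpleGraph.connected_iff]
  refine ⟨?_, hne⟩
  have step : ∀ u u' : T.V,
      (SimpleGraph.fromRel fun x y : T.V => ∃ e : T.E, T.ends e = s(x, y)).Adj u u' →
      (quotGraph A).Reachable (Quotient.mk (A.vSetoid ⊤) u) (Quotient.mk (A.vSetoid ⊤) u') := by
    intro u u' hadj
    rw [SimpleGraph.fromRel_adj] at hadj
    obtain ⟨hne', hor⟩ := hadj
    have hedge : ∃ g : T.E, T.ends g = s(u, u') := by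
      rcases hor with ⟨g, hg⟩ | ⟨g, hg⟩
      · exact ⟨g, hg⟩
      · exact ⟨g, by rw [hg, Sym2.eq_swap]⟩
    obtain ⟨g, hg⟩ := hedge
    by_cases hvert : A.Vertical ⊤ g
    · obtain ⟨p, q, hpq, hrel⟩ := hvert
      rw [hg] at hpq
      have hrel' : A.vrel ⊤ u u' := by
        rcases Sym2.eq_iff.mp hpq with ⟨h1, h2⟩ | ⟨h1, h2⟩
        · rw [← h1, ← h2] at hrel; exact hrel
        · rw [← h2, ← h1] at hrel
          obtain ⟨δ, -, hδ⟩ := hrel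
          exact ⟨δ⁻¹, Subgroup.mem_top _, by rw [← hδ, map_inv, Equiv.Perm.coe_inv, Equiv.symm_apply_apply]⟩
      rw [Quotient.sound hrel']
    · by_cases heq : Quotient.mk (A.vSetoid ⊤) u = Quotient.mk (A.vSetoid ⊤) u'
      · rw [heq]
      · apply SimpleGraph.Adj.reachable
        rw [quotGraph, SimpleGraph.fromRel_adj]
        exact ⟨heq, Or.inl ⟨g, u, u', hvert, hg, rfl, rfl⟩⟩
  intro a b
  obtain ⟨u, rfl⟩ := Quotient.exists_rep a
  obtain ⟨v, rfl⟩ := Quotient.exists_rep b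
  have hreach := (T.connected.preconnected u v).some
  clear hne
  induction hreach with
  | nil => rfl
  | cons hadj q ih => exact (step _ _ hadj).trans ih

lemma quot_edge_bound (A : GraphAction Γ T) :
    Nat.card (quotGraph A).edgeSet ≤ Nat.card (A.quotE ⊤) := by
  classical
  have mk_act : ∀ (δ : Γ) (p : T.V),
      Quotient.mk (A.vSetoid ⊤) (A.actV δ p) = Quotient.mk (A.vSetoid ⊤) p := fun δ p =>
    Quotient.sound ⟨δ⁻¹, Subgroup.mem_top _, by rw [map_inv, Equiv.Perm.coe_inv, Equiv.symm_apply_apply]⟩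
  have wd : ∀ (a b : {e : T.E // ¬ A.Vertical ⊤ e}),
      ((A.eSetoid ⊤).comap (Subtype.val : {e : T.E // ¬ A.Vertical ⊤ e} → T.E)).r a b →
      Sym2.map (Quotient.mk (A.vSetoid ⊤)) (T.ends a.val) =
      Sym2.map (Quotient.mk (A.vSetoid ⊤)) (T.ends b.val) := by
    rintro a b ⟨δ, -, hδ⟩
    have hends : T.ends b.val = Sym2.map (A.actV δ) (T.ends a.val) := by
      rw [← hδ]; exact A.ends_map δ a.val
    rw [hends, Sym2.map_map]
    obtain ⟨p, q, hpq⟩ : ∃ p q, T.ends a.val = s(p, q) :=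
      Sym2.ind (fun p q => ⟨p, q, rfl⟩) (T.ends a.val)
    rw [hpq]
    simp only [Sym2.map_pair_eq, Function.comp_apply]
    rw [mk_act δ p, mk_act δ q]
  let F : A.quotE ⊤ → Sym2 (A.quotV ⊤) := Quotient.lift _ wd
  have hsurj : ∀ s : (quotGraph A).edgeSet, ∃ q : A.quotE ⊤, F q = s.val := by
    rintro ⟨s, hs⟩
    obtain ⟨a, b, rfl⟩ : ∃ a b, s = s(a, b) := Sym2.ind (fun a b => ⟨a, b, rfl⟩) s
    rw [SimpleGraph.mem_edgeSet] at hs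
    rw [quotGraph, SimpleGraph.fromRel_adj] at hs
    obtain ⟨hne, hor⟩ := hs
    rcases hor with ⟨e, p, q, hnv, hpq, hp, hq⟩ | ⟨e, p, q, hnv, hpq, hp, hq⟩
    · refine ⟨Quotient.mk _ ⟨e, hnv⟩, ?_⟩
      show Sym2.map (Quotient.mk (A.vSetoid ⊤)) (T.ends e) = _
      rw [hpq, Sym2.map_pair_eq, hp, hq]
    · refine ⟨Quotient.mk _ ⟨e, hnv⟩, ?_⟩
      show Sym2.map (Quotient.mk (A.vSetoid ⊤)) (T.ends e) = _
      rw [hpq, Sym2.map_pair_eq, hp, hq, Sym2.eq_swap]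
  choose g hg using hsurj
  have hinj : Function.Injective g := by
    intro s₁ s₂ h
    apply Subtype.ext
    rw [← hg s₁, ← hg s₂, h]
  exact Nat.card_le_card_of_injective g hinj

end TH

/-- If a nontrivial group `Γ` acts harmonically on a tree `T`
(genus 0), then `0 < R < 2`, `|Γ| = 2/(2 − R)`, and there is exactly one branch point
`y`, with either `r_y = w_y = 1` (so `|Γ| = 2`), or `r_y = |Γ| ≥ 2` and `w_y = 0`. -/
theorem tree_harmonic_action {Γ : Type} [Group Γ] [Nontrivial Γ] {T : Multigraph}
    (A : GraphAction Γ T) (hA : A.ActsHarmonically) (hT : T.genus = 0) :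
    0 < A.ram ⊤ ∧ A.ram ⊤ < 2 ∧ (Nat.card Γ : ℚ) = 2 / (2 - A.ram ⊤) ∧
    (∃! y : A.quotV ⊤, A.IsBranch ⊤ y) ∧
    ∀ y : A.quotV ⊤, A.IsBranch ⊤ y →
      (A.r ⊤ y = 1 ∧ A.w ⊤ y = 1 ∧ Nat.card Γ = 2) ∨
      (A.r ⊤ y = Nat.card Γ ∧ 2 ≤ A.r ⊤ y ∧ A.w ⊤ y = 0) := by
  classical
  haveI : Finite Γ := TH.finite_gamma A
  letI := Fintype.ofFinite Γ
  set n := Nat.card Γ with hn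
  have hn2 : 2 ≤ n := by
    rw [hn, Nat.card_eq_fintype_card]
    exact Fintype.one_lt_card_iff_nontrivial.mpr ‹Nontrivial Γ›
  have hnQ : (2:ℚ) ≤ (n:ℚ) := by exact_mod_cast hn2
  have hn0 : (n:ℚ) ≠ 0 := by positivity
  -- basic counting facts
  have hEsplit := TH.e_split A
  have hNV := TH.sumNV A hA
  have hgen : Fintype.card T.V = Fintype.card T.E + 1 := by
    have h := hT
    unfold Multigraph.genus at h
    omega
  have hSumV := TH.sumV A
  have hOS : ∀ y : A.quotV ⊤,
      n = A.r ⊤ y * Nat.card {x : T.V // A.vrel ⊤ y.out x} :=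
    fun y => TH.orbit_stab_vertex A y.out
  have hrpos : ∀ y : A.quotV ⊤, 1 ≤ A.r ⊤ y := by
    intro y
    have : Nonempty {γ : Γ // γ ∈ (⊤ : Subgroup Γ) ∧ A.actV γ y.out = y.out} :=
      ⟨⟨1, Subgroup.mem_top 1, by simp⟩⟩
    exact Nat.card_pos
  have hdvd : ∀ y : A.quotV ⊤, A.vertMult ⊤ y.out = A.r ⊤ y * A.w ⊤ y := fun y =>
    (Nat.mul_div_cancel' (TH.stab_dvd_vertMult A hA y.out)).symm
  have hSumVert := TH.sum_vertMult A
  have hDC := TH.double_count A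
  -- the ramification number as a finite sum
  have hram : A.ram ⊤ =
      ∑ y : A.quotV ⊤, (2 * (1 - 1 / (A.r ⊤ y : ℚ)) + (A.w ⊤ y : ℚ)) :=
    finsum_eq_sum_of_fintype _
  -- per-vertex identity
  have hkey : ∀ y : A.quotV ⊤,
      (n : ℚ) * (2 * (1 - 1 / (A.r ⊤ y : ℚ)) + (A.w ⊤ y : ℚ)) =
      2 * (n:ℚ) - 2 * (Nat.card {x : T.V // A.vrel ⊤ y.out x} : ℚ) +
      (Nat.card {x : T.V // A.vrel ⊤ y.out x} : ℚ) * (A.vertMult ⊤ y.out : ℚ) := by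
    intro y
    have h1 : (n : ℚ) = (A.r ⊤ y : ℚ) * (Nat.card {x : T.V // A.vrel ⊤ y.out x} : ℚ) := by
      exact_mod_cast hOS y
    have h2 : (A.vertMult ⊤ y.out : ℚ) = (A.r ⊤ y : ℚ) * (A.w ⊤ y : ℚ) := by
      exact_mod_cast hdvd y
    have hr0 : (A.r ⊤ y : ℚ) ≠ 0 := by
      have := hrpos y
      positivity
    rw [h1, h2]
    field_simp
  -- summed identity
  have hsum1 : (n : ℚ) * A.ram ⊤ =
      2 * (n:ℚ) * (Nat.card (A.quotV ⊤) : ℚ) - 2 * (Fintype.card T.V : ℚ) +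
      2 * (Nat.card {e : T.E // A.Vertical ⊤ e} : ℚ) := by
    rw [hram, Finset.mul_sum, Finset.sum_congr rfl fun y _ => hkey y,
      Finset.sum_add_distrib, Finset.sum_sub_distrib, Finset.sum_const, Finset.card_univ]
    have e1 : (∑ y : A.quotV ⊤, (Nat.card {x : T.V // A.vrel ⊤ y.out x} : ℚ)) =
        (Fintype.card T.V : ℚ) := by
      rw [← Nat.cast_sum, ← hSumV]
    have e2 : (∑ y : A.quotV ⊤,
        (Nat.card {x : T.V // A.vrel ⊤ y.out x} : ℚ) * (A.vertMult ⊤ y.out : ℚ)) =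
        2 * (Nat.card {e : T.E // A.Vertical ⊤ e} : ℚ) := by
      have : (∑ y : A.quotV ⊤,
          Nat.card {x : T.V // A.vrel ⊤ y.out x} * A.vertMult ⊤ y.out) =
          2 * Nat.card {e : T.E // A.Vertical ⊤ e} := by
        rw [← hSumVert, hDC]
      calc (∑ y : A.quotV ⊤,
          (Nat.card {x : T.V // A.vrel ⊤ y.out x} : ℚ) * (A.vertMult ⊤ y.out : ℚ))
          = ((∑ y : A.quotV ⊤,
            Nat.card {x : T.V // A.vrel ⊤ y.out x} * A.vertMult ⊤ y.out : ℕ) : ℚ) := by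
            push_cast; ring_nf
        _ = _ := by rw [this]; push_cast; ring
    rw [← Finset.mul_sum, e1, e2, nsmul_eq_mul]
    simp only [Nat.card_eq_fintype_card]
    ring
  -- the master identity
  have hmaster : (n : ℚ) * A.ram ⊤ =
      2 * (n:ℚ) * (Nat.card (A.quotV ⊤) : ℚ) - 2 * (n:ℚ) * (Nat.card (A.quotE ⊤) : ℚ) - 2 := by
    have hVcast : (Fintype.card T.V : ℚ) = (Nat.card {e : T.E // A.Vertical ⊤ e} : ℚ) +
        (Nat.card (A.quotE ⊤) : ℚ) * (n:ℚ) + 1 := by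
      have hnat : Fintype.card T.V = Nat.card {e : T.E // A.Vertical ⊤ e} +
          Nat.card (A.quotE ⊤) * n + 1 := by
        rw [hgen, hEsplit, hNV]
      exact_mod_cast hnat
    rw [hsum1, hVcast]
    ring
  -- nonnegativity of each term
  have hcnonneg : ∀ y : A.quotV ⊤,
      0 ≤ 2 * (1 - 1 / (A.r ⊤ y : ℚ)) + (A.w ⊤ y : ℚ) := by
    intro y
    have h1 : (1:ℚ) ≤ (A.r ⊤ y : ℚ) := by exact_mod_cast hrpos y
    have h2 : 1 / (A.r ⊤ y : ℚ) ≤ 1 := by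
      rw [div_le_one (by linarith)]; exact h1
    have h3 : (0:ℚ) ≤ (A.w ⊤ y : ℚ) := Nat.cast_nonneg _
    linarith
  have hRnonneg : 0 ≤ A.ram ⊤ := by
    rw [hram]; exact Finset.sum_nonneg fun y _ => hcnonneg y
  -- V' = E' + 1
  have hb1 := TH.conn_card_bound (TH.quotGraph_connected A)
  have hb2 := TH.quot_edge_bound A
  have hVle : Nat.card (A.quotV ⊤) ≤ Nat.card (A.quotE ⊤) + 1 := by
    rw [Nat.card_eq_fintype_card]
    omega
  have hlow : Nat.card (A.quotE ⊤) < Nat.card (A.quotV ⊤) := by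
    by_contra hcon
    push_neg at hcon
    have hconQ : (Nat.card (A.quotV ⊤) : ℚ) ≤ (Nat.card (A.quotE ⊤) : ℚ) := by
      exact_mod_cast hcon
    nlinarith [hmaster, hRnonneg, hnQ]
  have hVeq : Nat.card (A.quotV ⊤) = Nat.card (A.quotE ⊤) + 1 := by omega
  have hVeqQ : (Nat.card (A.quotV ⊤) : ℚ) = (Nat.card (A.quotE ⊤) : ℚ) + 1 := by
    exact_mod_cast hVeq
  -- R = 2 - 2/n
  have hnR : (n : ℚ) * A.ram ⊤ = 2 * (n:ℚ) - 2 := by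
    rw [hmaster, hVeqQ]; ring
  have hRval : A.ram ⊤ = 2 - 2 / (n:ℚ) := by
    have hexp : (n:ℚ) * (2 - 2/(n:ℚ)) = 2 * (n:ℚ) - 2 := by field_simp
    exact mul_left_cancel₀ hn0 (hnR.trans hexp.symm)
  have hdivlt : (0:ℚ) < 2 / (n:ℚ) := by positivity
  have hdivle : (2:ℚ) / (n:ℚ) ≤ 1 := by
    rw [div_le_one (by linarith)]; exact hnQ
  -- dichotomy for contributions
  have hdich : ∀ y : A.quotV ⊤,
      (2 * (1 - 1 / (A.r ⊤ y : ℚ)) + (A.w ⊤ y : ℚ) = 0) ∨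
      1 ≤ 2 * (1 - 1 / (A.r ⊤ y : ℚ)) + (A.w ⊤ y : ℚ) := by
    intro y
    rcases Nat.lt_or_ge (A.r ⊤ y) 2 with hr | hr
    · have hr1 : A.r ⊤ y = 1 := by have := hrpos y; omega
      have hsimp : 2 * (1 - 1 / ((A.r ⊤ y : ℕ) : ℚ)) + (A.w ⊤ y : ℚ) = (A.w ⊤ y : ℚ) := by
        rw [hr1]; norm_num
      rw [hsimp]
      rcases Nat.eq_zero_or_pos (A.w ⊤ y) with hw | hw
      · left; exact_mod_cast hw
      · right; exact_mod_cast hw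
    · right
      have h1 : (2:ℚ) ≤ (A.r ⊤ y : ℚ) := by exact_mod_cast hr
      have h2 : 1 / (A.r ⊤ y : ℚ) ≤ 1/2 := by
        apply one_div_le_one_div_of_le
        · norm_num
        · exact h1
      have h3 : (0:ℚ) ≤ (A.w ⊤ y : ℚ) := Nat.cast_nonneg _
      linarith
  have hczero : ∀ y : A.quotV ⊤, ¬ A.IsBranch ⊤ y →
      2 * (1 - 1 / (A.r ⊤ y : ℚ)) + (A.w ⊤ y : ℚ) = 0 := by
    intro y hy
    have h1 : ¬ (0 < 2 * (1 - 1 / (A.r ⊤ y : ℚ)) + (A.w ⊤ y : ℚ)) := hy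
    linarith [hcnonneg y, not_lt.mp h1]
  -- existence of a branch point
  have hex : ∃ y : A.quotV ⊤, A.IsBranch ⊤ y := by
    by_contra hno
    push_neg at hno
    have hzero : A.ram ⊤ = 0 := by
      rw [hram]
      exact Finset.sum_eq_zero fun y _ => hczero y (hno y)
    rw [hRval] at hzero
    linarith
  -- uniqueness
  have hone : ∀ y : A.quotV ⊤, A.IsBranch ⊤ y →
      1 ≤ 2 * (1 - 1 / (A.r ⊤ y : ℚ)) + (A.w ⊤ y : ℚ) := by
    intro y hy
    rcases hdich y with h | h
    · exfalso
      have : (0:ℚ) < 2 * (1 - 1 / (A.r ⊤ y : ℚ)) + (A.w ⊤ y : ℚ) := hy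
      linarith
    · exact h
  have huniq : ∀ y₁ y₂ : A.quotV ⊤, A.IsBranch ⊤ y₁ → A.IsBranch ⊤ y₂ → y₁ = y₂ := by
    intro y₁ y₂ h1 h2
    by_contra hne
    have hsum2 : (2 * (1 - 1 / (A.r ⊤ y₁ : ℚ)) + (A.w ⊤ y₁ : ℚ)) +
        (2 * (1 - 1 / (A.r ⊤ y₂ : ℚ)) + (A.w ⊤ y₂ : ℚ)) ≤ A.ram ⊤ := by
      rw [hram]
      have hsub := Finset.sum_le_sum_of_subset_of_nonneg
        (Finset.subset_univ ({y₁, y₂} : Finset (A.quotV ⊤)))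
        (fun y _ _ => hcnonneg y)
      rwa [Finset.sum_pair hne] at hsub
    have := hone y₁ h1
    have := hone y₂ h2
    rw [hRval] at hsum2
    linarith
  -- value of the contribution at the branch point
  have hcy : ∀ y : A.quotV ⊤, A.IsBranch ⊤ y →
      2 * (1 - 1 / (A.r ⊤ y : ℚ)) + (A.w ⊤ y : ℚ) = 2 - 2/(n:ℚ) := by
    intro y hy
    have hsingle : (∑ y' : A.quotV ⊤, (2 * (1 - 1 / (A.r ⊤ y' : ℚ)) + (A.w ⊤ y' : ℚ))) =
        2 * (1 - 1 / (A.r ⊤ y : ℚ)) + (A.w ⊤ y : ℚ) :=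
      Finset.sum_eq_single_of_mem y (Finset.mem_univ y)
        (fun y' _ hne => hczero y' fun hb => hne (huniq y' y hb hy))
    rw [← hsingle, ← hram, hRval]
  refine ⟨?_, ?_, ?_, ?_, ?_⟩
  · rw [hRval]; linarith
  · rw [hRval]; linarith
  · rw [hRval]
    have h1 : (2:ℚ) - (2 - 2 / (n:ℚ)) = 2 / (n:ℚ) := by ring
    rw [h1]
    rw [div_div_eq_mul_div]
    field_simp
  · obtain ⟨y, hy⟩ := hex
    exact ⟨y, hy, fun y' hy' => huniq y' y hy' hy⟩
  · intro y hy
    have hcy' := hcy y hy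
    rcases Nat.lt_or_ge (A.r ⊤ y) 2 with hr | hr
    · left
      have hr1 : A.r ⊤ y = 1 := by have := hrpos y; omega
      rw [hr1] at hcy'
      norm_num at hcy'
      -- hcy' : (A.w ⊤ y : ℚ) = 2 - 2/n
      have hb1 : (1:ℚ) ≤ (A.w ⊤ y : ℚ) := by rw [hcy']; linarith
      have hb2 : (A.w ⊤ y : ℚ) < 2 := by rw [hcy']; linarith
      have hw1 : A.w ⊤ y = 1 := by
        have l1 : 1 ≤ A.w ⊤ y := by exact_mod_cast hb1
        have l2 : A.w ⊤ y < 2 := by exact_mod_cast hb2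
        omega
      refine ⟨hr1, hw1, ?_⟩
      rw [hw1] at hcy'
      have hnval : (n:ℚ) = 2 := by
        have : ((1:ℕ):ℚ) = 2 - 2/(n:ℚ) := hcy'
        field_simp at this
        push_cast at this
        linarith
      exact_mod_cast hnval
    · right
      have hw0 : A.w ⊤ y = 0 := by
        by_contra hw
        have hw1 : (1:ℚ) ≤ (A.w ⊤ y : ℚ) := by
          exact_mod_cast Nat.one_le_iff_ne_zero.mpr hw
        have h1 : (2:ℚ) ≤ (A.r ⊤ y : ℚ) := by exact_mod_cast hr
        have h2 : 1 / (A.r ⊤ y : ℚ) ≤ 1/2 := by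
          apply one_div_le_one_div_of_le
          · norm_num
          · exact h1
        linarith
      have hr0 : (0:ℚ) < (A.r ⊤ y : ℚ) := by
        have := hrpos y
        positivity
      have hrn : (A.r ⊤ y : ℚ) = (n:ℚ) := by
        rw [hw0] at hcy'
        push_cast at hcy'
        have h6 : (2:ℚ)/(n:ℚ) = 2 * (1/(n:ℚ)) := by ring
        rw [h6] at hcy'
        have hinv : 1 / (A.r ⊤ y : ℚ) = 1 / (n:ℚ) := by linarith
        have h7 := (div_eq_div_iff (ne_of_gt hr0) hn0).mp hinv
        linarith
      exact ⟨by exact_mod_cast hrn, hr, hw0⟩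
end
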